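/- arXiv:2411.02055 — 4 statements merged into one kernel-verified Lean document; each statement's English description precedes it below -/
import Mathlib

section
/- For every z > 0 and every ν ≥ 1, defining C(K_ν(z)) = -z K_ν'(z)/K_ν(z), one has √((ν - 1/2)² + z²) + 1/2 < C(K_ν(z)) < √((ν - 1)² + z²) + 1. -/
open Real MeasureTheory

/-- Modified Bessel function of the first kind of real order ν (Schläfli's
integral representation, valid for z > 0). -/
noncomputable def besselI (ν z : ℝ) : ℝ :=
  (1 / π) * ∫ θ in (0:ℝ)..π, Real.exp (z * Real.cos θ) * Real.cos (ν * θ)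
    - (Real.sin (ν * π) / π) *
      ∫ t in Set.Ioi (0:ℝ), Real.exp (-(z * Real.cosh t) - ν * t)

/-- Modified Bessel function of the second kind of real order ν
(Basset's integral representation, valid for z > 0). -/
noncomputable def besselK (ν z : ℝ) : ℝ :=
  ∫ t in Set.Ioi (0:ℝ), Real.exp (-(z * Real.cosh t)) * Real.cosh (ν * t)

namespace S7
open Set Filter Topology

noncomputable def K1 (ν z : ℝ) : ℝ :=
  ∫ t in Set.Ioi (0:ℝ), Real.exp (-(z * Real.cosh t)) * (Real.cosh t * Real.cosh (ν * t))

noncomputable def K2 (ν z : ℝ) : ℝ :=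
  ∫ t in Set.Ioi (0:ℝ), Real.exp (-(z * Real.cosh t)) *
    (Real.cosh t * (Real.cosh t * Real.cosh (ν * t)))

/- basic pointwise bounds -/
lemma exp_half_le_cosh {t : ℝ} (ht : 0 ≤ t) : Real.exp t / 2 ≤ Real.cosh t := by
  rw [Real.cosh_eq]; have := (Real.exp_pos (-t)).le; linarith

lemma cosh_le_exp {t : ℝ} (ht : 0 ≤ t) : Real.cosh t ≤ Real.exp t := by
  rw [Real.cosh_eq]
  have : Real.exp (-t) ≤ Real.exp t := Real.exp_le_exp.2 (by linarith)
  linarith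

lemma abs_cosh_le {c t : ℝ} (ht : 0 ≤ t) (hc : 0 ≤ c) :
    |Real.cosh (c * t)| ≤ Real.exp (c * t) := by
  rw [abs_of_nonneg (Real.cosh_pos _).le]
  exact cosh_le_exp (by positivity)

/- integrability -/
lemma integ (z c : ℝ) (hz : 0 < z) :
    IntegrableOn (fun t => Real.exp (-(z * Real.cosh t)) * Real.exp (c * t)) (Ioi 0) := by
  have hcont : Continuous fun t => Real.exp (-(z * Real.cosh t)) * Real.exp (c * t) := by
    fun_prop
  set T : ℝ := max 1 (8 * (|c| + 1) / z) with hT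
  have hT1 : (1:ℝ) ≤ T := le_max_left _ _
  have hT0 : (0:ℝ) ≤ T := by linarith
  rw [← Ioc_union_Ioi_eq_Ioi hT0]
  apply IntegrableOn.union
  · exact (hcont.continuousOn.integrableOn_Icc).mono_set Ioc_subset_Icc_self
  · have hint : IntegrableOn (fun t : ℝ => Real.exp (-t)) (Ioi T) := by
      have := exp_neg_integrableOn_Ioi T (b := 1) one_pos
      simpa using this
    apply Integrable.mono' hint hcont.aestronglyMeasurable
    rw [ae_restrict_iff' measurableSet_Ioi]
    apply Filter.Eventually.of_forall
    intro t ht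
    have ht' : T < t := ht
    have ht1 : (1:ℝ) ≤ t := le_trans hT1 ht'.le
    have ht0 : (0:ℝ) ≤ t := by linarith
    have hch : Real.exp t / 2 ≤ Real.cosh t := exp_half_le_cosh ht0
    have hexp : t/2 + 1 ≤ Real.exp (t/2) := Real.add_one_le_exp (t/2)
    have hsq : Real.exp t = Real.exp (t/2) * Real.exp (t/2) := by
      rw [← Real.exp_add]; ring_nf
    have het : t^2 / 4 ≤ Real.exp t := by nlinarith
    have hbig : (|c| + 1) * t ≤ z * Real.cosh t := by
      have h8 : 8 * (|c|+1) / z ≤ T := le_max_right _ _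
      have h9 : 8 * (|c|+1) ≤ z * T := by rw [div_le_iff₀ hz] at h8; linarith
      nlinarith [mul_le_mul_of_nonneg_left het hz.le, mul_le_mul_of_nonneg_left hch hz.le,
        mul_le_mul_of_nonneg_right h9 ht0,
        mul_le_mul_of_nonneg_right (mul_le_mul_of_nonneg_left ht'.le hz.le) ht0]
    rw [norm_mul, Real.norm_eq_abs, Real.norm_eq_abs,
      abs_of_nonneg (Real.exp_nonneg _), abs_of_nonneg (Real.exp_nonneg _), ← Real.exp_add]
    apply Real.exp_le_exp.2
    have hct : c * t ≤ |c| * t := mul_le_mul_of_nonneg_right (le_abs_self c) ht0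
    linarith

lemma integ_dom {z c M : ℝ} (hz : 0 < z) (hM : 0 ≤ M) {w : ℝ → ℝ} (hw : Continuous w)
    (hb : ∀ t, 0 ≤ t → |w t| ≤ M * Real.exp (c * t)) :
    IntegrableOn (fun t => Real.exp (-(z * Real.cosh t)) * w t) (Ioi 0) := by
  have hcont : Continuous fun t => Real.exp (-(z * Real.cosh t)) * w t := by fun_prop
  apply Integrable.mono' ((integ z c hz).const_mul M) hcont.aestronglyMeasurable
  rw [ae_restrict_iff' measurableSet_Ioi]
  apply Filter.Eventually.of_forall
  intro t ht
  have ht0 : (0:ℝ) ≤ t := (le_of_lt ht)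
  have h1 := hb t ht0
  have h2 : (0:ℝ) < Real.exp (-(z * Real.cosh t)) := Real.exp_pos _
  rw [norm_mul, Real.norm_eq_abs, Real.norm_eq_abs, abs_of_nonneg h2.le]
  calc Real.exp (-(z * Real.cosh t)) * |w t|
      ≤ Real.exp (-(z * Real.cosh t)) * (M * Real.exp (c * t)) := by
        exact mul_le_mul_of_nonneg_left h1 h2.le
    _ = M * (Real.exp (-(z * Real.cosh t)) * Real.exp (c * t)) := by ring

/- derivative under integral sign -/
lemma hasDerivAt_int {w : ℝ → ℝ} (hw : Continuous w) {c : ℝ}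
    (hb : ∀ t, 0 ≤ t → |w t| ≤ Real.exp (c * t)) {z : ℝ} (hz : 0 < z) :
    HasDerivAt (fun x => ∫ t in Ioi (0:ℝ), Real.exp (-(x * Real.cosh t)) * w t)
      (-∫ t in Ioi (0:ℝ), Real.exp (-(z * Real.cosh t)) * (Real.cosh t * w t)) z := by
  have hc0 : (0:ℝ) < z/2 := by linarith
  have main := hasDerivAt_integral_of_dominated_loc_of_deriv_le
    (μ := volume.restrict (Ioi (0:ℝ)))
    (F := fun x t => Real.exp (-(x * Real.cosh t)) * w t)
    (F' := fun x t => -(Real.cosh t * (Real.exp (-(x * Real.cosh t)) * w t)))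
    (x₀ := z) (bound := fun t => Real.exp (-(z/2 * Real.cosh t)) * Real.exp ((c+1) * t))
    (s := Metric.ball z (z/2)) (Metric.ball_mem_nhds z hc0) ?_ ?_ ?_ ?_ ?_ ?_
  · obtain ⟨-, h⟩ := main
    refine h.congr_deriv ?_
    rw [← integral_neg]
    congr 1; funext t; ring
  · apply Filter.Eventually.of_forall
    intro x
    exact (Continuous.aestronglyMeasurable (by fun_prop))
  · apply integ_dom hz zero_le_one hw
    intro t ht; rw [one_mul]; exact hb t ht
  · exact (Continuous.aestronglyMeasurable (by fun_prop))
  · rw [ae_restrict_iff' measurableSet_Ioi]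
    apply Filter.Eventually.of_forall
    intro t ht x hx
    have ht0 : (0:ℝ) ≤ t := (le_of_lt ht)
    have hxz : z/2 < x := by
      rw [Metric.mem_ball, Real.dist_eq, abs_sub_lt_iff] at hx
      linarith [hx.2]
    have hcosh : (0:ℝ) < Real.cosh t := Real.cosh_pos t
    have h1 : Real.exp (-(x * Real.cosh t)) ≤ Real.exp (-(z/2 * Real.cosh t)) :=
      Real.exp_le_exp.2 (by nlinarith)
    have h2 : |w t| ≤ Real.exp (c * t) := hb t ht0
    have h3 : Real.cosh t ≤ Real.exp t := cosh_le_exp ht0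
    rw [norm_neg, norm_mul, norm_mul, Real.norm_eq_abs, Real.norm_eq_abs, Real.norm_eq_abs,
      abs_of_nonneg hcosh.le, abs_of_nonneg (Real.exp_nonneg _)]
    have : Real.cosh t * (Real.exp (-(x * Real.cosh t)) * |w t|)
        ≤ Real.exp t * (Real.exp (-(z/2 * Real.cosh t)) * Real.exp (c * t)) := by
      apply mul_le_mul h3 _ (by positivity) (Real.exp_nonneg _)
      exact mul_le_mul h1 h2 (abs_nonneg _) (Real.exp_nonneg _)
    calc Real.cosh t * (Real.exp (-(x * Real.cosh t)) * |w t|)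
        ≤ Real.exp t * (Real.exp (-(z/2 * Real.cosh t)) * Real.exp (c * t)) := this
      _ = Real.exp (-(z/2 * Real.cosh t)) * Real.exp ((c+1) * t) := by
          simp only [← Real.exp_add]; ring_nf
  · exact integ (z/2) (c+1) hc0
  · rw [ae_restrict_iff' measurableSet_Ioi]
    apply Filter.Eventually.of_forall
    intro t ht x hx
    have h := (((hasDerivAt_id x).mul_const (Real.cosh t)).neg.exp).mul_const (w t)
    refine h.congr_deriv ?_
    simp only [id_eq, Pi.neg_apply]; ring

lemma hK_deriv {ν z : ℝ} (hν : 0 ≤ ν) (hz : 0 < z) :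
    HasDerivAt (besselK ν) (-K1 ν z) z := by
  have h := hasDerivAt_int (w := fun t => Real.cosh (ν * t)) (by fun_prop)
    (c := ν) (fun t ht => abs_cosh_le ht hν) hz
  exact h

lemma hK1_deriv {ν z : ℝ} (hν : 0 ≤ ν) (hz : 0 < z) :
    HasDerivAt (K1 ν) (-K2 ν z) z := by
  have h := hasDerivAt_int (w := fun t => Real.cosh t * Real.cosh (ν * t)) (by fun_prop)
    (c := ν + 1) ?_ hz
  · exact h
  · intro t ht
    rw [abs_mul]
    calc |Real.cosh t| * |Real.cosh (ν * t)| ≤ Real.exp t * Real.exp (ν * t) := by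
          apply mul_le_mul _ (abs_cosh_le ht hν) (abs_nonneg _) (Real.exp_nonneg _)
          rw [abs_of_nonneg (Real.cosh_pos t).le]; exact cosh_le_exp ht
      _ = Real.exp ((ν + 1) * t) := by rw [← Real.exp_add]; ring_nf

lemma tail (z c : ℝ) (hz : 0 < z) :
    ∀ᶠ t in atTop, Real.exp (-(z * Real.cosh t)) * Real.exp (c * t) ≤ Real.exp (-t) := by
  rw [eventually_atTop]
  refine ⟨max 1 (8 * (|c| + 1) / z), fun t ht => ?_⟩
  have hT1 : (1:ℝ) ≤ max 1 (8 * (|c| + 1) / z) := le_max_left _ _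
  have ht1 : (1:ℝ) ≤ t := le_trans hT1 ht
  have ht0 : (0:ℝ) ≤ t := by linarith
  have hch : Real.exp t / 2 ≤ Real.cosh t := exp_half_le_cosh ht0
  have hexp : t/2 + 1 ≤ Real.exp (t/2) := Real.add_one_le_exp (t/2)
  have hsq : Real.exp t = Real.exp (t/2) * Real.exp (t/2) := by
    rw [← Real.exp_add]; ring_nf
  have het : t^2 / 4 ≤ Real.exp t := by nlinarith
  have h8 : 8 * (|c|+1) / z ≤ max 1 (8 * (|c| + 1) / z) := le_max_right _ _
  have h9 : 8 * (|c|+1) ≤ z * max 1 (8 * (|c| + 1) / z) := by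
    rw [div_le_iff₀ hz] at h8; linarith
  have hbig : (|c| + 1) * t ≤ z * Real.cosh t := by
    nlinarith [mul_le_mul_of_nonneg_left het hz.le, mul_le_mul_of_nonneg_left hch hz.le,
      mul_le_mul_of_nonneg_right h9 ht0,
      mul_le_mul_of_nonneg_right (mul_le_mul_of_nonneg_left ht hz.le) ht0]
  rw [← Real.exp_add]
  apply Real.exp_le_exp.2
  have hct : c * t ≤ |c| * t := mul_le_mul_of_nonneg_right (le_abs_self c) ht0
  linarith

lemma K_integrable {ν z : ℝ} (hν : 0 ≤ ν) (hz : 0 < z) :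
    IntegrableOn (fun t => Real.exp (-(z * Real.cosh t)) * Real.cosh (ν * t)) (Ioi 0) := by
  apply integ_dom hz zero_le_one (by fun_prop)
  intro t ht; rw [one_mul]; exact abs_cosh_le ht hν

lemma K1_integrable {ν z : ℝ} (hν : 0 ≤ ν) (hz : 0 < z) :
    IntegrableOn (fun t => Real.exp (-(z * Real.cosh t)) * (Real.cosh t * Real.cosh (ν * t)))
      (Ioi 0) := by
  apply integ_dom hz zero_le_one (c := ν + 1) (by fun_prop)
  intro t ht
  rw [one_mul, abs_mul]
  calc |Real.cosh t| * |Real.cosh (ν * t)| ≤ Real.exp t * Real.exp (ν * t) := by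
        apply mul_le_mul _ (abs_cosh_le ht hν) (abs_nonneg _) (Real.exp_nonneg _)
        rw [abs_of_nonneg (Real.cosh_pos t).le]; exact cosh_le_exp ht
    _ = Real.exp ((ν + 1) * t) := by rw [← Real.exp_add]; ring_nf

lemma K2_integrable {ν z : ℝ} (hν : 0 ≤ ν) (hz : 0 < z) :
    IntegrableOn (fun t => Real.exp (-(z * Real.cosh t)) *
      (Real.cosh t * (Real.cosh t * Real.cosh (ν * t)))) (Ioi 0) := by
  apply integ_dom hz zero_le_one (c := ν + 2) (by fun_prop)
  intro t ht
  rw [one_mul, abs_mul, abs_mul]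
  have h1 : |Real.cosh t| ≤ Real.exp t := by
    rw [abs_of_nonneg (Real.cosh_pos t).le]; exact cosh_le_exp ht
  calc |Real.cosh t| * (|Real.cosh t| * |Real.cosh (ν * t)|)
      ≤ Real.exp t * (Real.exp t * Real.exp (ν * t)) := by
        apply mul_le_mul h1 _ (by positivity) (Real.exp_nonneg _)
        exact mul_le_mul h1 (abs_cosh_le ht hν) (abs_nonneg _) (Real.exp_nonneg _)
    _ = Real.exp ((ν + 2) * t) := by rw [← Real.exp_add, ← Real.exp_add]; ring_nf

/- the modified Bessel ODE -/
lemma ode {ν z : ℝ} (hν : 0 ≤ ν) (hz : 0 < z) :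
    z^2 * K2 ν z = z * K1 ν z + (z^2 + ν^2) * besselK ν z := by
  set F : ℝ → ℝ := fun t => -(Real.exp (-(z * Real.cosh t)) *
    (z * Real.sinh t * Real.cosh (ν * t) + ν * Real.sinh (ν * t))) with hFdef
  set f : ℝ → ℝ := fun t => Real.exp (-(z * Real.cosh t)) *
    ((z^2 * (Real.cosh t ^ 2 - 1) - z * Real.cosh t - ν^2) * Real.cosh (ν * t)) with hfdef
  have hderiv : ∀ t : ℝ, HasDerivAt F (f t) t := by
    intro t
    have he : HasDerivAt (fun y => Real.exp (-(z * Real.cosh y)))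
        (Real.exp (-(z * Real.cosh t)) * -(z * Real.sinh t)) t :=
      (((Real.hasDerivAt_cosh t).const_mul z).neg).exp
    have hcν : HasDerivAt (fun y => Real.cosh (ν * y)) (Real.sinh (ν * t) * ν) t := by
      simpa using ((hasDerivAt_id t).const_mul ν).cosh
    have hsν : HasDerivAt (fun y => Real.sinh (ν * y)) (Real.cosh (ν * t) * ν) t := by
      simpa using ((hasDerivAt_id t).const_mul ν).sinh
    have hu : HasDerivAt (fun y => z * Real.sinh y * Real.cosh (ν * y) + ν * Real.sinh (ν * y))
        (z * Real.cosh t * Real.cosh (ν * t) + z * Real.sinh t * (Real.sinh (ν * t) * ν)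
          + ν * (Real.cosh (ν * t) * ν)) t :=
      ((((Real.hasDerivAt_sinh t).const_mul z).mul hcν).add (hsν.const_mul ν))
    have h := (he.mul hu).neg
    refine h.congr_deriv ?_
    have hs := Real.sinh_sq t
    simp only [hfdef]
    rw [← hs]
    ring
  have hcont : ContinuousWithinAt F (Ici 0) 0 := (hderiv 0).continuousAt.continuousWithinAt
  have hfint : IntegrableOn f (Ioi 0) := by
    apply integ_dom hz (M := z^2 + z + ν^2) (by positivity) (c := ν + 2) (by fun_prop)
    intro t ht
    have h1 : Real.cosh t ≤ Real.exp t := cosh_le_exp ht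
    have h2 : (1:ℝ) ≤ Real.cosh t := Real.one_le_cosh t
    have h3 : |Real.cosh (ν * t)| ≤ Real.exp (ν * t) := abs_cosh_le ht hν
    have h4 : Real.exp ((ν + 2) * t) = Real.exp (ν * t) * (Real.exp t * Real.exp t) := by
      rw [← Real.exp_add, ← Real.exp_add]; ring_nf
    rw [abs_mul, h4]
    have h5 : |z^2 * (Real.cosh t ^ 2 - 1) - z * Real.cosh t - ν^2|
        ≤ (z^2 + z + ν^2) * (Real.exp t * Real.exp t) := by
      have hee : Real.cosh t * Real.cosh t ≤ Real.exp t * Real.exp t :=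
        mul_le_mul h1 h1 (Real.cosh_pos t).le (Real.exp_nonneg t)
      have he1 : (1:ℝ) ≤ Real.exp t := Real.one_le_exp ht
      have l0 : (1:ℝ) ≤ Real.cosh t ^ 2 := by nlinarith
      have l1a : z * Real.cosh t ≤ z * Real.exp t := mul_le_mul_of_nonneg_left h1 hz.le
      have l1 : z * Real.cosh t ≤ z * (Real.exp t * Real.exp t) := by
        nlinarith [mul_nonneg (mul_nonneg hz.le (Real.exp_nonneg t)) (sub_nonneg.2 he1)]
      have l2 : ν^2 ≤ ν^2 * (Real.exp t * Real.exp t) := by nlinarith [sq_nonneg ν]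
      have l3 : (0:ℝ) ≤ z^2 * (Real.exp t * Real.exp t) := by positivity
      have l4 : (0:ℝ) ≤ z^2 * (Real.cosh t ^ 2 - 1) := by nlinarith [sq_nonneg z]
      have l5 : z^2 * (Real.cosh t ^ 2 - 1) ≤ z^2 * (Real.exp t * Real.exp t) := by
        nlinarith [sq_nonneg z]
      have l6 : (0:ℝ) ≤ z * Real.cosh t := by positivity
      have l7 : (0:ℝ) ≤ ν^2 := sq_nonneg ν
      rw [abs_le]
      constructor <;> linarith
    calc |z^2 * (Real.cosh t ^ 2 - 1) - z * Real.cosh t - ν^2| * |Real.cosh (ν * t)|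
        ≤ ((z^2 + z + ν^2) * (Real.exp t * Real.exp t)) * Real.exp (ν * t) :=
          mul_le_mul h5 h3 (abs_nonneg _) (by positivity)
      _ = (z^2 + z + ν^2) * (Real.exp (ν * t) * (Real.exp t * Real.exp t)) := by ring
  have htends : Tendsto F atTop (𝓝 0) := by
    apply squeeze_zero_norm' (a := fun t => (z + ν) * Real.exp (-t))
    · filter_upwards [tail z (ν + 1) hz, eventually_ge_atTop (0:ℝ)] with t h1 ht0
      have eν0 : (0:ℝ) ≤ ν * t := mul_nonneg hν ht0
      have e1 : Real.sinh t ≤ Real.exp t := by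
        rw [Real.sinh_eq]; have := (Real.exp_pos (-t)).le; have := (Real.exp_pos t).le; linarith
      have e0 : (0:ℝ) ≤ Real.sinh t := by
        rw [Real.sinh_eq]
        have := Real.exp_le_exp.2 (neg_le_self ht0)
        linarith
      have e3 : (0:ℝ) ≤ Real.sinh (ν * t) := by
        rw [Real.sinh_eq]
        have := Real.exp_le_exp.2 (neg_le_self eν0)
        linarith
      have e4 : Real.cosh (ν * t) ≤ Real.exp (ν * t) := cosh_le_exp eν0
      have hexpsum : Real.exp ((ν + 1) * t) = Real.exp (ν * t) * Real.exp t := by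
        rw [← Real.exp_add]; ring_nf
      have e2 : Real.sinh (ν * t) ≤ Real.exp (ν * t) := by
        rw [Real.sinh_eq]
        have := (Real.exp_pos (-(ν * t))).le
        have := (Real.exp_pos (ν * t)).le
        linarith
      have he1 : (1:ℝ) ≤ Real.exp t := Real.one_le_exp ht0
      have eu : z * Real.sinh t * Real.cosh (ν * t) + ν * Real.sinh (ν * t)
          ≤ (z + ν) * Real.exp ((ν + 1) * t) := by
        rw [hexpsum]
        nlinarith [mul_le_mul_of_nonneg_left
            (mul_le_mul e1 e4 (Real.cosh_pos (ν * t)).le (Real.exp_nonneg t)) hz.le,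
          mul_le_mul_of_nonneg_left e2 hν,
          mul_nonneg (mul_nonneg hν (Real.exp_nonneg (ν * t))) (sub_nonneg.2 he1)]
      have hu0 : (0:ℝ) ≤ z * Real.sinh t * Real.cosh (ν * t) + ν * Real.sinh (ν * t) := by
        have := (Real.cosh_pos (ν * t)).le
        positivity
      rw [norm_neg, norm_mul, Real.norm_eq_abs, Real.norm_eq_abs,
        abs_of_nonneg (Real.exp_nonneg _), abs_of_nonneg hu0]
      calc Real.exp (-(z * Real.cosh t)) *
            (z * Real.sinh t * Real.cosh (ν * t) + ν * Real.sinh (ν * t))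
          ≤ Real.exp (-(z * Real.cosh t)) * ((z + ν) * Real.exp ((ν + 1) * t)) :=
            mul_le_mul_of_nonneg_left eu (Real.exp_nonneg _)
        _ = (z + ν) * (Real.exp (-(z * Real.cosh t)) * Real.exp ((ν + 1) * t)) := by ring
        _ ≤ (z + ν) * Real.exp (-t) := by
            apply mul_le_mul_of_nonneg_left h1 (by positivity)
    · have : Tendsto (fun t : ℝ => Real.exp (-t)) atTop (𝓝 0) := Real.tendsto_exp_neg_atTop_nhds_zero
      simpa using this.const_mul (z + ν)
  have hibp := integral_Ioi_of_hasDerivAt_of_tendsto hcont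
    (fun x _ => hderiv x) hfint htends
  have hF0 : F 0 = 0 := by simp [hFdef]
  rw [hF0, sub_zero] at hibp
  have hsplit : ∫ t in Ioi (0:ℝ), f t
      = z^2 * K2 ν z - z * K1 ν z - (z^2 + ν^2) * besselK ν z := by
    have hi0 := K_integrable hν hz
    have hi1 := K1_integrable hν hz
    have hi2 := K2_integrable hν hz
    unfold K1 K2 besselK
    rw [show (∫ t in Ioi (0:ℝ), f t) = ∫ t in Ioi (0:ℝ),
        ((z^2 * (Real.exp (-(z * Real.cosh t)) * (Real.cosh t * (Real.cosh t * Real.cosh (ν * t))))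
          - z * (Real.exp (-(z * Real.cosh t)) * (Real.cosh t * Real.cosh (ν * t))))
          - (z^2 + ν^2) * (Real.exp (-(z * Real.cosh t)) * Real.cosh (ν * t))) from by
      congr 1; funext t; simp only [hfdef]; ring]
    have hsub1 : Integrable (fun t => z^2 * (Real.exp (-(z * Real.cosh t)) *
        (Real.cosh t * (Real.cosh t * Real.cosh (ν * t))))
        - z * (Real.exp (-(z * Real.cosh t)) * (Real.cosh t * Real.cosh (ν * t))))
        (volume.restrict (Ioi 0)) := by
      exact (hi2.const_mul _).sub (hi1.const_mul _)
    rw [integral_sub hsub1 (hi0.const_mul _),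
      integral_sub (hi2.const_mul _) (hi1.const_mul _),
      integral_const_mul, integral_const_mul, integral_const_mul]
  rw [hsplit] at hibp
  linarith

/- positivity and nonnegativity -/
lemma K_pos {ν z : ℝ} (hν : 0 ≤ ν) (hz : 0 < z) : 0 < besselK ν z := by
  unfold besselK
  rw [setIntegral_pos_iff_support_of_nonneg_ae]
  · have hsupp : (Function.support fun t => Real.exp (-(z * Real.cosh t)) * Real.cosh (ν * t))
        ∩ Ioi 0 = Ioi 0 := by
      apply inter_eq_right.2
      intro t _
      simp only [Function.mem_support]
      positivity
    rw [hsupp]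
    simp [Real.volume_Ioi]
  · rw [EventuallyLE, ae_restrict_iff' measurableSet_Ioi]
    apply Filter.Eventually.of_forall
    intro t _
    positivity
  · exact K_integrable hν hz

lemma K1_nonneg {ν z : ℝ} (hz : 0 < z) : 0 ≤ K1 ν z := by
  apply setIntegral_nonneg measurableSet_Ioi
  intro t _
  positivity

lemma K_nonneg {ν z : ℝ} (hν : 0 ≤ ν) (hz : 0 < z) : 0 ≤ besselK ν z := (K_pos hν hz).le

/- exponential upper bounds -/
lemma K_le {ν z : ℝ} (hν : 0 ≤ ν) (hz : 1 ≤ z) :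
    besselK ν z ≤ Real.exp (1 - z) * (∫ t in Ioi (0:ℝ),
      Real.exp (-(1 * Real.cosh t)) * Real.exp (ν * t)) := by
  have hz0 : (0:ℝ) < z := by linarith
  have hA_int : IntegrableOn (fun t => Real.exp (-(1 * Real.cosh t)) * Real.exp (ν * t))
      (Ioi 0) := integ 1 ν one_pos
  rw [← integral_const_mul]
  unfold besselK
  apply setIntegral_mono_on (K_integrable hν hz0) (hA_int.const_mul _) measurableSet_Ioi
  intro t ht
  have ht0 : (0:ℝ) ≤ t := (le_of_lt ht)
  have h1 : Real.cosh (ν * t) ≤ Real.exp (ν * t) := cosh_le_exp (mul_nonneg hν ht0)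
  have h2 : Real.exp (-(z * Real.cosh t)) ≤ Real.exp (1 - z) * Real.exp (-(1 * Real.cosh t)) := by
    rw [← Real.exp_add]
    apply Real.exp_le_exp.2
    have hc1 : (1:ℝ) ≤ Real.cosh t := Real.one_le_cosh t
    nlinarith
  calc Real.exp (-(z * Real.cosh t)) * Real.cosh (ν * t)
      ≤ (Real.exp (1 - z) * Real.exp (-(1 * Real.cosh t))) * Real.exp (ν * t) :=
        mul_le_mul h2 h1 (Real.cosh_pos _).le (by positivity)
    _ = Real.exp (1 - z) * (Real.exp (-(1 * Real.cosh t)) * Real.exp (ν * t)) := by ring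

lemma K1_le {ν z : ℝ} (hν : 0 ≤ ν) (hz : 1 ≤ z) :
    K1 ν z ≤ Real.exp (1 - z) * (∫ t in Ioi (0:ℝ),
      Real.exp (-(1 * Real.cosh t)) * Real.exp ((ν + 1) * t)) := by
  have hz0 : (0:ℝ) < z := by linarith
  have hA_int : IntegrableOn (fun t => Real.exp (-(1 * Real.cosh t)) * Real.exp ((ν + 1) * t))
      (Ioi 0) := integ 1 (ν + 1) one_pos
  rw [← integral_const_mul]
  unfold K1
  apply setIntegral_mono_on (K1_integrable hν hz0) (hA_int.const_mul _) measurableSet_Ioi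
  intro t ht
  have ht0 : (0:ℝ) ≤ t := (le_of_lt ht)
  have h1 : Real.cosh (ν * t) ≤ Real.exp (ν * t) := cosh_le_exp (mul_nonneg hν ht0)
  have h1' : Real.cosh t ≤ Real.exp t := cosh_le_exp ht0
  have h2 : Real.exp (-(z * Real.cosh t)) ≤ Real.exp (1 - z) * Real.exp (-(1 * Real.cosh t)) := by
    rw [← Real.exp_add]
    apply Real.exp_le_exp.2
    have hc1 : (1:ℝ) ≤ Real.cosh t := Real.one_le_cosh t
    nlinarith
  have h3 : Real.cosh t * Real.cosh (ν * t) ≤ Real.exp ((ν + 1) * t) := by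
    have := mul_le_mul h1' h1 (Real.cosh_pos _).le (Real.exp_nonneg _)
    calc Real.cosh t * Real.cosh (ν * t) ≤ Real.exp t * Real.exp (ν * t) := this
      _ = Real.exp ((ν + 1) * t) := by rw [← Real.exp_add]; ring_nf
  calc Real.exp (-(z * Real.cosh t)) * (Real.cosh t * Real.cosh (ν * t))
      ≤ (Real.exp (1 - z) * Real.exp (-(1 * Real.cosh t))) * Real.exp ((ν + 1) * t) := by
        apply mul_le_mul h2 h3 (by positivity) (by positivity)
    _ = Real.exp (1 - z) * (Real.exp (-(1 * Real.cosh t)) * Real.exp ((ν + 1) * t)) := by ring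

/- the comparison function -/
noncomputable def Phi (a b z : ℝ) : ℝ :=
  Real.sqrt (a^2 + z^2) - a * Real.log (a + Real.sqrt (a^2 + z^2)) + (a + b) * Real.log z

noncomputable def G (a b ν z : ℝ) : ℝ :=
  Real.exp (-(Phi a b z)) * ((Real.sqrt (a^2 + z^2) + b) * besselK ν z - z * K1 ν z)

lemma hs_deriv (a : ℝ) {z : ℝ} (hz : 0 < z) :
    HasDerivAt (fun x => Real.sqrt (a^2 + x^2)) (z / Real.sqrt (a^2 + z^2)) z := by
  have hpos : (0:ℝ) < a^2 + z^2 := by positivity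
  have h : HasDerivAt (fun x : ℝ => a^2 + x^2) (2*z) z := by
    simpa using ((hasDerivAt_pow 2 z).const_add (a^2))
  have h2 := h.sqrt (ne_of_gt hpos)
  convert h2 using 1
  rw [mul_comm 2 (Real.sqrt (a^2+z^2))]
  rw [eq_comm, mul_comm 2 z]
  exact mul_div_mul_right z _ two_ne_zero

lemma hPhi_deriv {a b z : ℝ} (ha : 0 ≤ a) (hz : 0 < z) :
    HasDerivAt (Phi a b) ((Real.sqrt (a^2 + z^2) + b) / z) z := by
  set s := Real.sqrt (a^2 + z^2) with hsdef
  have hs : 0 < s := Real.sqrt_pos.2 (by positivity)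
  have hs2 : s ^ 2 = a^2 + z^2 := Real.sq_sqrt (by positivity)
  have has : 0 < a + s := by linarith
  have h1 := hs_deriv a hz
  have h3 : HasDerivAt (fun x => Real.log (a + Real.sqrt (a^2 + x^2)))
      ((z / s) / (a + s)) z := (h1.const_add a).log (ne_of_gt has)
  have h5 : HasDerivAt (Phi a b)
      (z / s - a * ((z / s) / (a + s)) + (a + b) * z⁻¹) z :=
    (h1.sub (h3.const_mul a)).add ((Real.hasDerivAt_log (ne_of_gt hz)).const_mul (a+b))
  convert h5 using 1
  have h0 : s ≠ 0 := ne_of_gt hs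
  have h0' : a + s ≠ 0 := ne_of_gt has
  have h0'' : z ≠ 0 := ne_of_gt hz
  field_simp
  linear_combination s * hs2

lemma hG_deriv {a b ν z : ℝ} (ha : 0 ≤ a) (hν : 0 ≤ ν) (hz : 0 < z) :
    HasDerivAt (G a b ν)
      (Real.exp (-(Phi a b z)) * (besselK ν z *
        (z / Real.sqrt (a^2 + z^2) +
          (z^2 + ν^2 - (Real.sqrt (a^2 + z^2) + b)^2) / z))) z := by
  have hs : 0 < Real.sqrt (a^2 + z^2) := Real.sqrt_pos.2 (by positivity)
  have hs2 : Real.sqrt (a^2 + z^2) ^ 2 = a^2 + z^2 := Real.sq_sqrt (by positivity)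
  have hE : HasDerivAt (fun x => Real.exp (-(Phi a b x)))
      (Real.exp (-(Phi a b z)) * -((Real.sqrt (a^2 + z^2) + b) / z)) z :=
    ((hPhi_deriv ha hz).neg).exp
  have hW : HasDerivAt (fun x => (Real.sqrt (a^2 + x^2) + b) * besselK ν x - x * K1 ν x)
      ((z / Real.sqrt (a^2 + z^2)) * besselK ν z
        + (Real.sqrt (a^2 + z^2) + b) * (-K1 ν z)
        - (1 * K1 ν z + z * (-K2 ν z))) z := by
    exact (((hs_deriv a hz).add_const b).mul (hK_deriv hν hz)).sub
      ((hasDerivAt_id z).mul (hK1_deriv hν hz))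
  have h := hE.mul hW
  refine h.congr_deriv ?_
  have hode := ode hν hz
  have h0 : Real.sqrt (a^2 + z^2) ≠ 0 := ne_of_gt hs
  have h0'' : z ≠ 0 := ne_of_gt hz
  field_simp
  linear_combination (Real.sqrt (a^2 + z^2)) * hode

lemma log_le_two_sqrt {x : ℝ} (hx : 0 < x) : Real.log x ≤ 2 * Real.sqrt x := by
  have h1 : Real.log (Real.sqrt x) = Real.log x / 2 := Real.log_sqrt hx.le
  have h2 : Real.log (Real.sqrt x) ≤ Real.sqrt x - 1 :=
    Real.log_le_sub_one_of_pos (Real.sqrt_pos.2 hx)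
  nlinarith [Real.sqrt_nonneg x]

lemma tendsto_G_zero {a b ν : ℝ} (ha : 0 ≤ a) (hb : 0 ≤ b) (hν : 0 ≤ ν) :
    Tendsto (G a b ν) atTop (𝓝 0) := by
  obtain ⟨A, hA⟩ : ∃ x : ℝ, x = ∫ t in Ioi (0:ℝ),
      Real.exp (-(1 * Real.cosh t)) * Real.exp (ν * t) := ⟨_, rfl⟩
  obtain ⟨A', hA'⟩ : ∃ x : ℝ, x = ∫ t in Ioi (0:ℝ),
      Real.exp (-(1 * Real.cosh t)) * Real.exp ((ν + 1) * t) := ⟨_, rfl⟩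
  have hA0 : 0 ≤ A := by
    rw [hA]; exact setIntegral_nonneg measurableSet_Ioi (fun t _ => by positivity)
  have hA'0 : 0 ≤ A' := by
    rw [hA']; exact setIntegral_nonneg measurableSet_Ioi (fun t _ => by positivity)
  obtain ⟨M, hM⟩ : ∃ x : ℝ, x = (a + b) * A + A + A' := ⟨_, rfl⟩
  have hM0 : 0 ≤ M := by rw [hM]; positivity
  -- E1 : a * log (2a+z) ≤ z/4 eventually
  have E1 : ∀ᶠ z in atTop, a * Real.log (2*a + z) ≤ z / 4 := by
    filter_upwards [eventually_ge_atTop (max 1 ((8 * a * Real.sqrt (2*a+1))^2))] with z hzb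
    have hz1 : (1:ℝ) ≤ z := le_trans (le_max_left _ _) hzb
    have hz0 : (0:ℝ) < z := by linarith
    have hzc : (8 * a * Real.sqrt (2*a+1))^2 ≤ z := le_trans (le_max_right _ _) hzb
    have hsz : 8 * a * Real.sqrt (2*a+1) ≤ Real.sqrt z := by
      have h0 : (0:ℝ) ≤ 8 * a * Real.sqrt (2*a+1) := by positivity
      calc 8 * a * Real.sqrt (2*a+1) = Real.sqrt ((8 * a * Real.sqrt (2*a+1))^2) :=
            (Real.sqrt_sq h0).symm
        _ ≤ Real.sqrt z := Real.sqrt_le_sqrt hzc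
    have hlog : Real.log (2*a + z) ≤ 2 * Real.sqrt (2*a + z) :=
      log_le_two_sqrt (by linarith)
    have hsqs : Real.sqrt (2*a + z) ≤ Real.sqrt (2*a+1) * Real.sqrt z := by
      rw [← Real.sqrt_mul (by linarith)]
      apply Real.sqrt_le_sqrt
      nlinarith
    have hss : Real.sqrt z * Real.sqrt z = z := Real.mul_self_sqrt hz0.le
    have hsn : 0 ≤ Real.sqrt z := Real.sqrt_nonneg z
    have h1 : a * Real.log (2*a + z) ≤ 2 * a * (Real.sqrt (2*a+1) * Real.sqrt z) := by
      have := mul_le_mul_of_nonneg_left hlog ha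
      have := mul_le_mul_of_nonneg_left hsqs (by positivity : (0:ℝ) ≤ 2 * a)
      nlinarith
    nlinarith [mul_le_mul_of_nonneg_right hsz hsn]
  -- E2 : M * z ≤ exp (z/4) eventually
  have E2 : ∀ᶠ z in atTop, M * z ≤ Real.exp (z / 4) := by
    have h0 : Tendsto (fun z : ℝ => (4 * M) * ((z/4) * Real.exp (-(z/4)))) atTop (𝓝 0) := by
      have h1 : Tendsto (fun x : ℝ => x * Real.exp (-x)) atTop (𝓝 0) := by
        simpa using tendsto_pow_mul_exp_neg_atTop_nhds_zero 1
      have h2 : Tendsto (fun z : ℝ => z / 4) atTop atTop :=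
        tendsto_id.atTop_div_const (by norm_num)
      have := (h1.comp h2).const_mul (4 * M)
      simpa using this
    have h3 : ∀ᶠ z in atTop, (4 * M) * ((z/4) * Real.exp (-(z/4))) ≤ 1 :=
      h0.eventually_le_const one_pos
    filter_upwards [h3, eventually_ge_atTop (0:ℝ)] with z h4 hz0
    have he : (0:ℝ) < Real.exp (z/4) := Real.exp_pos _
    have hre : Real.exp (-(z/4)) * Real.exp (z/4) = 1 := by
      rw [← Real.exp_add]; simp
    nlinarith [Real.exp_pos (-(z/4))]
  apply squeeze_zero_norm' (a := fun z => Real.exp (1 - z/2))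
  · filter_upwards [E1, E2, eventually_ge_atTop (1:ℝ)] with z hE1 hE2 hz1
    have hz0 : (0:ℝ) < z := by linarith
    have hs0 : 0 ≤ Real.sqrt (a^2 + z^2) := Real.sqrt_nonneg _
    have hsu : Real.sqrt (a^2 + z^2) ≤ a + z := by
      have h : a^2 + z^2 ≤ (a+z)^2 := by nlinarith
      calc Real.sqrt (a^2 + z^2) ≤ Real.sqrt ((a+z)^2) := Real.sqrt_le_sqrt h
        _ = a + z := Real.sqrt_sq (by linarith)
    have hsl : z ≤ Real.sqrt (a^2 + z^2) := by
      calc z = Real.sqrt (z^2) := (Real.sqrt_sq hz0.le).symm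
        _ ≤ Real.sqrt (a^2 + z^2) := Real.sqrt_le_sqrt (by nlinarith)
    have hlog1 : 0 ≤ Real.log z := Real.log_nonneg hz1
    have has : 0 < a + Real.sqrt (a^2 + z^2) := by linarith
    have hloge : Real.log (a + Real.sqrt (a^2 + z^2)) ≤ Real.log (2*a + z) :=
      (Real.log_le_log_iff has (by linarith)).2 (by linarith)
    have hPhi_ge : z - a * Real.log (2*a + z) ≤ Phi a b z := by
      unfold Phi
      have h1 := mul_le_mul_of_nonneg_left hloge ha
      have h2 : 0 ≤ (a+b) * Real.log z := mul_nonneg (by linarith) hlog1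
      linarith
    have hePhi : Real.exp (-(Phi a b z)) ≤ Real.exp (a * Real.log (2*a + z) - z) :=
      Real.exp_le_exp.2 (by linarith)
    have hKb := K_le hν hz1
    have hK1b := K1_le hν hz1
    rw [← hA] at hKb
    rw [← hA'] at hK1b
    have hK0 : 0 ≤ besselK ν z := K_nonneg hν hz0
    have hK10 : 0 ≤ K1 ν z := K1_nonneg hz0
    rw [Real.norm_eq_abs]
    have habs : |G a b ν z| ≤ Real.exp (-(Phi a b z)) *
        ((Real.sqrt (a^2 + z^2) + b) * besselK ν z + z * K1 ν z) := by
      unfold G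
      rw [abs_mul, abs_of_nonneg (Real.exp_nonneg _)]
      apply mul_le_mul_of_nonneg_left _ (Real.exp_nonneg _)
      calc |(Real.sqrt (a^2 + z^2) + b) * besselK ν z - z * K1 ν z|
          ≤ |(Real.sqrt (a^2 + z^2) + b) * besselK ν z| + |z * K1 ν z| := abs_sub _ _
        _ = (Real.sqrt (a^2 + z^2) + b) * besselK ν z + z * K1 ν z := by
            rw [abs_of_nonneg (by positivity), abs_of_nonneg (by positivity)]
    have hinner : (Real.sqrt (a^2 + z^2) + b) * besselK ν z + z * K1 ν z
        ≤ Real.exp (1 - z) * (M * z) := by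
      have t1 : (Real.sqrt (a^2 + z^2) + b) * besselK ν z
          ≤ (a + z + b) * (Real.exp (1 - z) * A) := by
        apply mul_le_mul (by linarith) hKb hK0 (by linarith)
      have t2 : z * K1 ν z ≤ z * (Real.exp (1 - z) * A') :=
        mul_le_mul_of_nonneg_left hK1b hz0.le
      have t3 : (a + z + b) * (Real.exp (1 - z) * A) + z * (Real.exp (1 - z) * A')
          ≤ Real.exp (1 - z) * (M * z) := by
        rw [hM]
        have he0 : (0:ℝ) < Real.exp (1 - z) := Real.exp_pos _
        nlinarith [mul_nonneg (mul_nonneg he0.le hA0) (sub_nonneg.2 hz1),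
          mul_nonneg he0.le (mul_nonneg ha hA0),
          mul_nonneg he0.le (mul_nonneg hb hA0)]
      linarith
    calc |G a b ν z| ≤ Real.exp (-(Phi a b z)) *
          ((Real.sqrt (a^2 + z^2) + b) * besselK ν z + z * K1 ν z) := habs
      _ ≤ Real.exp (a * Real.log (2*a + z) - z) * (Real.exp (1 - z) * (M * z)) := by
          apply mul_le_mul hePhi hinner
            (add_nonneg (mul_nonneg (by positivity) hK0) (mul_nonneg hz0.le hK10))
            (Real.exp_nonneg _)
      _ ≤ Real.exp (z/4 - z) * (Real.exp (1 - z) * Real.exp (z/4)) := by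
          apply mul_le_mul (Real.exp_le_exp.2 (by linarith)) _ _ (Real.exp_nonneg _)
          · exact mul_le_mul_of_nonneg_left hE2 (Real.exp_nonneg _)
          · exact mul_nonneg (Real.exp_nonneg _) (mul_nonneg hM0 hz0.le)
      _ = Real.exp (z/4 - z + (1 - z) + z/4) := by
          rw [← Real.exp_add, ← Real.exp_add]; ring_nf
      _ ≤ Real.exp (1 - z/2) := Real.exp_le_exp.2 (by linarith)
  · have h2 : Tendsto (fun z : ℝ => z / 2) atTop atTop :=
      tendsto_id.atTop_div_const (by norm_num)
    have := (Real.tendsto_exp_neg_atTop_nhds_zero.comp h2).const_mul (Real.exp 1)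
    simp only [mul_zero] at this
    apply this.congr
    intro z
    simp only [Function.comp]
    rw [← Real.exp_add]
    ring_nf

/- sign of the Riccati defect -/
lemma D_pos {ν z : ℝ} (hν : 1 ≤ ν) (hz : 0 < z) :
    0 < z / Real.sqrt ((ν - 1/2)^2 + z^2) +
      (z^2 + ν^2 - (Real.sqrt ((ν - 1/2)^2 + z^2) + 1/2)^2) / z := by
  set a := ν - 1/2 with hadef
  set s := Real.sqrt (a^2 + z^2) with hsdef
  have hapos : 0 < a := by rw [hadef]; linarith
  have hs : 0 < s := Real.sqrt_pos.2 (by positivity)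
  have hs2 : s ^ 2 = a^2 + z^2 := Real.sq_sqrt (by positivity)
  have hsa : a < s := by nlinarith
  have heq : z / s + (z^2 + ν^2 - (s + 1/2)^2) / z = a * (s - a) / (s * z) := by
    have hν : ν = a + 1/2 := by rw [hadef]; ring
    rw [hν]
    field_simp
    ring_nf
    linear_combination (-4 - 4*s) * hs2
  rw [heq]
  apply div_pos (by nlinarith) (by positivity)

lemma D_neg {ν z : ℝ} (hν : 1 ≤ ν) (hz : 0 < z) :
    z / Real.sqrt ((ν - 1)^2 + z^2) +
      (z^2 + ν^2 - (Real.sqrt ((ν - 1)^2 + z^2) + 1)^2) / z < 0 := by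
  set a := ν - 1 with hadef
  set s := Real.sqrt (a^2 + z^2) with hsdef
  have ha : 0 ≤ a := by rw [hadef]; linarith
  have hs : 0 < s := Real.sqrt_pos.2 (by positivity)
  have hs2 : s ^ 2 = a^2 + z^2 := Real.sq_sqrt (by positivity)
  have hsa : a < s := by nlinarith
  have heq : z / s + (z^2 + ν^2 - (s + 1)^2) / z = -((s - a)^2) / (s * z) := by
    have hν : ν = a + 1 := by rw [hadef]; ring
    rw [hν]
    field_simp
    ring_nf
    linear_combination (-1 - s) * hs2
  rw [heq]
  apply div_neg_of_neg_of_pos (by nlinarith) (by positivity)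

/- monotone functions tending to zero -/
lemma G_neg {ν z : ℝ} (hν : 1 ≤ ν) (hz : 0 < z) : G (ν - 1/2) (1/2) ν z < 0 := by
  have hν0 : (0:ℝ) ≤ ν := by linarith
  have ha : (0:ℝ) ≤ ν - 1/2 := by linarith
  have hmono : StrictMonoOn (G (ν - 1/2) (1/2) ν) (Ioi 0) := by
    apply strictMonoOn_of_deriv_pos (convex_Ioi 0)
    · intro x hx
      exact (hG_deriv ha hν0 hx).differentiableAt.continuousAt.continuousWithinAt
    · intro x hx
      rw [interior_Ioi] at hx
      rw [(hG_deriv ha hν0 hx).deriv]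
      exact mul_pos (Real.exp_pos _) (mul_pos (K_pos hν0 hx) (D_pos hν hx))
  have h1 : G (ν - 1/2) (1/2) ν z < G (ν - 1/2) (1/2) ν (z+1) :=
    hmono (mem_Ioi.2 hz) (mem_Ioi.2 (by linarith)) (by linarith)
  have h2 : G (ν - 1/2) (1/2) ν (z+1) ≤ 0 := by
    have hev : ∀ᶠ y in atTop, G (ν - 1/2) (1/2) ν (z+1) ≤ G (ν - 1/2) (1/2) ν y := by
      filter_upwards [eventually_ge_atTop (z+1)] with y hy
      rcases eq_or_lt_of_le hy with h|h
      · rw [← h]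
      · exact (hmono (mem_Ioi.2 (by linarith)) (mem_Ioi.2 (by linarith)) h).le
    exact ge_of_tendsto (tendsto_G_zero ha (by norm_num) hν0) hev
  linarith

lemma G_pos {ν z : ℝ} (hν : 1 ≤ ν) (hz : 0 < z) : 0 < G (ν - 1) 1 ν z := by
  have hν0 : (0:ℝ) ≤ ν := by linarith
  have ha : (0:ℝ) ≤ ν - 1 := by linarith
  have hmono : StrictAntiOn (G (ν - 1) 1 ν) (Ioi 0) := by
    apply strictAntiOn_of_deriv_neg (convex_Ioi 0)
    · intro x hx
      exact (hG_deriv ha hν0 hx).differentiableAt.continuousAt.continuousWithinAt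
    · intro x hx
      rw [interior_Ioi] at hx
      rw [(hG_deriv ha hν0 hx).deriv]
      have := mul_neg_of_pos_of_neg (K_pos hν0 hx) (D_neg hν hx)
      exact mul_neg_of_pos_of_neg (Real.exp_pos _) this
  have h1 : G (ν - 1) 1 ν (z+1) < G (ν - 1) 1 ν z :=
    hmono (mem_Ioi.2 hz) (mem_Ioi.2 (by linarith)) (by linarith)
  have h2 : 0 ≤ G (ν - 1) 1 ν (z+1) := by
    have hev : ∀ᶠ y in atTop, G (ν - 1) 1 ν y ≤ G (ν - 1) 1 ν (z+1) := by
      filter_upwards [eventually_ge_atTop (z+1)] with y hy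
      rcases eq_or_lt_of_le hy with h|h
      · rw [← h]
      · exact (hmono (mem_Ioi.2 (by linarith)) (mem_Ioi.2 (by linarith)) h).le
    exact le_of_tendsto (tendsto_G_zero ha (by norm_num) hν0) hev
  linarith

end S7

/-- For z > 0 and ν ≥ 1, with C(K_ν(z)) = -z K_ν'(z)/K_ν(z),
√((ν-1/2)²+z²) + 1/2 < C(K_ν(z)) < √((ν-1)²+z²) + 1. -/
theorem stmt_7 (z ν : ℝ) (hz : 0 < z) (hν : 1 ≤ ν) :
    Real.sqrt ((ν - 1 / 2) ^ 2 + z ^ 2) + 1 / 2 <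
        -z * deriv (besselK ν) z / besselK ν z ∧
      -z * deriv (besselK ν) z / besselK ν z <
        Real.sqrt ((ν - 1) ^ 2 + z ^ 2) + 1 := by
  have hν0 : (0:ℝ) ≤ ν := by linarith
  have hKpos := S7.K_pos (ν := ν) hν0 hz
  have hd : deriv (besselK ν) z = -S7.K1 ν z := (S7.hK_deriv hν0 hz).deriv
  rw [hd]
  have hrw : -z * -S7.K1 ν z / besselK ν z = z * S7.K1 ν z / besselK ν z := by ring
  rw [hrw]
  constructor
  · have h := S7.G_neg hν hz
    unfold S7.G at h
    have he : 0 < Real.exp (-(S7.Phi (ν - 1/2) (1/2) z)) := Real.exp_pos _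
    have h2 : (Real.sqrt ((ν - 1/2)^2 + z^2) + 1/2) * besselK ν z - z * S7.K1 ν z < 0 := by
      nlinarith
    rw [lt_div_iff₀ hKpos]
    nlinarith
  · have h := S7.G_pos hν hz
    unfold S7.G at h
    have he : 0 < Real.exp (-(S7.Phi (ν - 1) 1 z)) := Real.exp_pos _
    have h2 : 0 < (Real.sqrt ((ν - 1)^2 + z^2) + 1) * besselK ν z - z * S7.K1 ν z := by
      nlinarith
    rw [div_lt_iff₀ hKpos]
    nlinarith
end

section
/- For z ≥ 0 and integer m ≥ 2, define G_m on (0,∞)² by G_m(ρ, ρ₀) = (ρρ₀/(2πh²)) I_m'(mρ/h) K_m'(mρ₀/h) for ρ < ρ₀ and (ρρ₀/(2πh²)) K_m'(mρ/h) I_m'(mρ₀/h) for ρ > ρ₀. Then for ρ ≠ ρ₀, the function u(ρ) = G_m(ρ, ρ₀) solves the ODE (ρ/(1+κ²ρ²)) u'' + ((1 - κ²ρ²)/(1+κ²ρ²)²) u' - (m²/ρ) u = 0, where κ = 1/h. -/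
set_option maxHeartbeats 1000000

open Real MeasureTheory Set Filter Metric

noncomputable def Kfun (ν : ℝ) (n : ℕ) (x : ℝ) : ℝ :=
  ∫ t in Set.Ioi (0:ℝ), Real.cosh t ^ n * Real.exp (-(x * Real.cosh t)) * Real.cosh (ν * t)

noncomputable def Afun (ν : ℝ) (n : ℕ) (x : ℝ) : ℝ :=
  ∫ θ in (0:ℝ)..π, Real.cos θ ^ n * Real.exp (x * Real.cos θ) * Real.cos (ν * θ)



/-- Quadratic lower bound for cosh. -/
lemma sq_quarter_le_cosh {t : ℝ} (ht : 0 ≤ t) : t ^ 2 / 4 ≤ Real.cosh t := by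
  have h1 : 1 + t + t ^ 2 / 2 ≤ Real.exp t := Real.quadratic_le_exp_of_nonneg ht
  have h2 : 0 < Real.exp (-t) := Real.exp_pos _
  rw [Real.cosh_eq]
  nlinarith

lemma cosh_le_exp_of_nonneg {t : ℝ} (ht : 0 ≤ t) : Real.cosh t ≤ Real.exp t := by
  have h2 : Real.exp (-t) ≤ 1 := Real.exp_le_one_iff.2 (by linarith)
  have h3 : (1:ℝ) ≤ Real.exp t := Real.one_le_exp ht
  rw [Real.cosh_eq]; linarith

/-- The master pointwise bound for K-type integrands. -/
lemma K_ptwise (ν : ℝ) (hν : 0 ≤ ν) (n : ℕ) {a y t : ℝ} (ha : 0 < a) (hy : a ≤ y)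
    (ht : 0 ≤ t) :
    Real.cosh t ^ n * Real.exp (-(y * Real.cosh t)) * Real.cosh (ν * t) ≤
      Real.exp (2 * ((n : ℝ) + ν) ^ 2 / a) * Real.exp (-(a / 8) * t ^ 2) := by
  have hc1 : (1:ℝ) ≤ Real.cosh t := Real.one_le_cosh t
  have hb1 : Real.cosh t ^ n ≤ Real.exp ((n : ℝ) * t) := by
    calc Real.cosh t ^ n ≤ Real.exp t ^ n := by
          exact pow_le_pow_left₀ (by linarith) (cosh_le_exp_of_nonneg ht) n
      _ = Real.exp ((n : ℝ) * t) := by rw [← Real.exp_nat_mul]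
  have hb2 : Real.cosh (ν * t) ≤ Real.exp (ν * t) :=
    cosh_le_exp_of_nonneg (by positivity)
  have hb3 : Real.exp (-(y * Real.cosh t)) ≤ Real.exp (-(a * (t ^ 2 / 4))) := by
    apply Real.exp_le_exp.2
    have := sq_quarter_le_cosh ht
    nlinarith
  have hstep : Real.cosh t ^ n * Real.exp (-(y * Real.cosh t)) * Real.cosh (ν * t) ≤
      Real.exp ((n : ℝ) * t) * Real.exp (-(a * (t ^ 2 / 4))) * Real.exp (ν * t) := by
    have h0 : (0:ℝ) ≤ Real.cosh t ^ n := by positivity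
    have h0' : (0:ℝ) ≤ Real.exp (-(y * Real.cosh t)) := (Real.exp_pos _).le
    have h0'' : (0:ℝ) ≤ Real.cosh (ν * t) := by positivity
    gcongr
  refine hstep.trans ?_
  rw [← Real.exp_add, ← Real.exp_add, ← Real.exp_add]
  apply Real.exp_le_exp.2
  have key : ((n : ℝ) + ν) * t ≤ 2 * ((n : ℝ) + ν) ^ 2 / a + a / 8 * t ^ 2 := by
    rw [div_add' _ _ _ (ne_of_gt ha)]
    rw [le_div_iff₀ ha]
    nlinarith [sq_nonneg (4 * ((n:ℝ) + ν) - a * t)]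
  nlinarith


lemma K_cont (ν : ℝ) (n : ℕ) (x : ℝ) :
    Continuous fun t => Real.cosh t ^ n * Real.exp (-(x * Real.cosh t)) * Real.cosh (ν * t) := by
  fun_prop

lemma gauss_int {b : ℝ} (hb : 0 < b) (C : ℝ) :
    IntegrableOn (fun t : ℝ => C * Real.exp (-b * t ^ 2)) (Set.Ioi 0) := by
  exact ((integrable_exp_neg_mul_sq hb).const_mul C).integrableOn

lemma K_integrable (ν : ℝ) (hν : 0 ≤ ν) (n : ℕ) {a x : ℝ} (ha : 0 < a) (hx : a ≤ x) :
    IntegrableOn (fun t => Real.cosh t ^ n * Real.exp (-(x * Real.cosh t)) * Real.cosh (ν * t))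
      (Set.Ioi (0:ℝ)) := by
  apply Integrable.mono (gauss_int (by positivity : (0:ℝ) < a/8)
    (Real.exp (2 * ((n : ℝ) + ν) ^ 2 / a)))
    ((K_cont ν n x).aestronglyMeasurable.restrict)
  filter_upwards [ae_restrict_mem measurableSet_Ioi] with t ht
  have ht' : (0:ℝ) ≤ t := le_of_lt ht
  have h1 := K_ptwise ν hν n ha hx ht'
  have hpos : (0:ℝ) ≤ Real.cosh t ^ n * Real.exp (-(x * Real.cosh t)) * Real.cosh (ν * t) := by
    have : (0:ℝ) < Real.cosh t := Real.cosh_pos t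
    have : (0:ℝ) < Real.cosh (ν*t) := Real.cosh_pos (ν*t)
    positivity
  rw [Real.norm_eq_abs, Real.norm_eq_abs, abs_of_nonneg hpos, abs_of_nonneg (by positivity)]
  exact h1


lemma K_hasDerivAt (ν : ℝ) (hν : 0 ≤ ν) (n : ℕ) {x : ℝ} (hx : 0 < x) :
    HasDerivAt (Kfun ν n) (-(Kfun ν (n+1) x)) x := by
  have hε : (0:ℝ) < x/2 := by linarith
  set F' : ℝ → ℝ → ℝ := fun y t =>
    -(Real.cosh t ^ (n+1) * Real.exp (-(y * Real.cosh t)) * Real.cosh (ν * t)) with hF'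
  set bound : ℝ → ℝ := fun t => Real.exp (2 * ((n+1 : ℕ) + ν) ^ 2 / (x/2)) *
      Real.exp (-((x/2) / 8) * t ^ 2) with hbound
  have h_bound : ∀ᵐ t ∂(volume.restrict (Set.Ioi (0:ℝ))), ∀ y ∈ ball x (x/2),
      ‖F' y t‖ ≤ bound t := by
    filter_upwards [ae_restrict_mem measurableSet_Ioi] with t ht y hy
    have ht' : (0:ℝ) ≤ t := le_of_lt ht
    have hy' : x/2 ≤ y := by
      have := abs_lt.1 (mem_ball_iff_norm.1 hy)
      linarith [this.1]
    have c1 : (0:ℝ) < Real.cosh t := Real.cosh_pos t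
    have c2 : (0:ℝ) < Real.cosh (ν*t) := Real.cosh_pos (ν*t)
    have hpos : (0:ℝ) ≤ Real.cosh t ^ (n+1) * Real.exp (-(y * Real.cosh t)) * Real.cosh (ν * t) := by
      positivity
    rw [hF']
    rw [norm_neg, Real.norm_eq_abs, abs_of_nonneg hpos]
    exact K_ptwise ν hν (n+1) hε hy' ht'
  have h_diff : ∀ᵐ t ∂(volume.restrict (Set.Ioi (0:ℝ))), ∀ y ∈ ball x (x/2),
      HasDerivAt (fun y => Real.cosh t ^ n * Real.exp (-(y * Real.cosh t)) * Real.cosh (ν * t))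
        (F' y t) y := by
    filter_upwards [ae_restrict_mem measurableSet_Ioi] with t _ y _
    have h1 : HasDerivAt (fun y : ℝ => -(y * Real.cosh t)) (-(Real.cosh t)) y := by
      exact (((hasDerivAt_id y).mul_const (Real.cosh t)).neg).congr_deriv (by ring)
    have h2 : HasDerivAt (fun y : ℝ => Real.exp (-(y * Real.cosh t)))
        (Real.exp (-(y * Real.cosh t)) * (-(Real.cosh t))) y := h1.exp
    have h3 := (h2.const_mul (Real.cosh t ^ n)).mul_const (Real.cosh (ν * t))
    refine h3.congr_deriv ?_
    symm
    simp only [hF']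
    ring
  have hbint : Integrable bound (volume.restrict (Set.Ioi (0:ℝ))) :=
    gauss_int (show (0:ℝ) < x/2/8 by positivity) (Real.exp (2 * ((n+1 : ℕ) + ν) ^ 2 / (x/2)))
  have hmeas : ∀ᶠ y in nhds x, AEStronglyMeasurable
      (fun t => Real.cosh t ^ n * Real.exp (-(y * Real.cosh t)) * Real.cosh (ν * t))
      (volume.restrict (Set.Ioi (0:ℝ))) :=
    Eventually.of_forall fun y => ((K_cont ν n y).aestronglyMeasurable.restrict)
  have h'meas : AEStronglyMeasurable (F' x) (volume.restrict (Set.Ioi (0:ℝ))) := by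
    rw [hF']; exact ((K_cont ν (n+1) x).neg).aestronglyMeasurable.restrict
  have hint : Integrable (fun t => Real.cosh t ^ n * Real.exp (-(x * Real.cosh t)) *
      Real.cosh (ν * t)) (volume.restrict (Set.Ioi (0:ℝ))) := K_integrable ν hν n hx (le_refl x)
  have main := hasDerivAt_integral_of_dominated_loc_of_deriv_le
    (F := fun y t => Real.cosh t ^ n * Real.exp (-(y * Real.cosh t)) * Real.cosh (ν * t))
    (F' := F') (bound := bound) (ball_mem_nhds x hε) hmeas hint h'meas h_bound hbint h_diff
  have heq : (∫ t in Set.Ioi (0:ℝ), F' x t) = -(Kfun ν (n+1) x) := by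
    rw [hF', integral_neg]; rfl
  rw [heq] at main
  exact main.2


lemma K_G_tendsto (ν : ℝ) (hν : 0 ≤ ν) {x : ℝ} (hx : 0 < x) :
    Tendsto (fun t => Real.exp (-(x * Real.cosh t)) *
      (-(x * (Real.sinh t * Real.cosh (ν * t))) - ν * Real.sinh (ν * t))) atTop (nhds 0) := by
  apply squeeze_zero_norm' (a := fun t => ((x + ν) * Real.exp (2*(1+ν)^2/x)) *
    Real.exp (-(x/8) * t^2))
  · filter_upwards [eventually_ge_atTop (0:ℝ)] with t ht
    have hsc : Real.sinh t ≤ Real.cosh t := (Real.sinh_lt_cosh t).le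
    have hce : Real.cosh t ≤ Real.exp t := cosh_le_exp_of_nonneg ht
    have hs0 : 0 ≤ Real.sinh t := by rw [← Real.sinh_zero]; exact Real.sinh_le_sinh.2 ht
    have hs0' : 0 ≤ Real.sinh (ν * t) := by rw [← Real.sinh_zero]; exact Real.sinh_le_sinh.2 (by positivity)
    have hsc' : Real.sinh (ν * t) ≤ Real.cosh (ν * t) := (Real.sinh_lt_cosh _).le
    have hce' : Real.cosh (ν * t) ≤ Real.exp (ν * t) := cosh_le_exp_of_nonneg (by positivity)
    have hc0' : 0 < Real.cosh (ν * t) := Real.cosh_pos _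
    have habs : |(-(x * (Real.sinh t * Real.cosh (ν * t))) - ν * Real.sinh (ν * t))| ≤
        (x + ν) * Real.exp ((1 + ν) * t) := by
      rw [abs_le]
      constructor
      · have b1 : x * (Real.sinh t * Real.cosh (ν * t)) ≤ x * (Real.exp t * Real.exp (ν * t)) := by
          have : Real.sinh t * Real.cosh (ν * t) ≤ Real.exp t * Real.exp (ν * t) := by
            apply mul_le_mul (hsc.trans hce) hce' hc0'.le (Real.exp_pos _).le
          nlinarith
        have b2 : ν * Real.sinh (ν * t) ≤ ν * Real.exp (ν * t) :=
          mul_le_mul_of_nonneg_left (hsc'.trans hce') hν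
        have b3 : Real.exp (ν * t) ≤ Real.exp ((1+ν) * t) :=
          Real.exp_le_exp.2 (by nlinarith)
        have b4 : Real.exp t * Real.exp (ν * t) = Real.exp ((1+ν)*t) := by
          rw [← Real.exp_add]; ring_nf
        nlinarith [Real.exp_pos ((1+ν)*t)]
      · have : 0 ≤ x * (Real.sinh t * Real.cosh (ν * t)) := by positivity
        have : 0 ≤ ν * Real.sinh (ν * t) := by positivity
        have : 0 ≤ (x + ν) * Real.exp ((1 + ν) * t) := by positivity
        linarith
    have hexp : Real.exp (-(x * Real.cosh t)) ≤ Real.exp (-(x * (t^2/4))) := by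
      apply Real.exp_le_exp.2
      have := sq_quarter_le_cosh ht
      nlinarith
    rw [Real.norm_eq_abs, abs_mul, abs_of_nonneg (Real.exp_pos _).le]
    calc Real.exp (-(x * Real.cosh t)) * |(-(x * (Real.sinh t * Real.cosh (ν * t))) - ν * Real.sinh (ν * t))|
        ≤ Real.exp (-(x * (t^2/4))) * ((x + ν) * Real.exp ((1 + ν) * t)) := by
          apply mul_le_mul hexp habs (abs_nonneg _) (Real.exp_pos _).le
      _ ≤ (x + ν) * Real.exp (2*(1+ν)^2/x) * Real.exp (-(x/8) * t^2) := by
          rw [mul_comm (Real.exp (-(x * (t^2/4))))]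
          rw [mul_assoc, mul_assoc, ← Real.exp_add, ← Real.exp_add]
          have hkey : (1+ν)*t - x * (t^2/4) ≤ 2*(1+ν)^2/x + (-(x/8) * t^2) := by
            rw [div_add' _ _ _ (ne_of_gt hx)]
            rw [le_div_iff₀ hx]
            nlinarith [sq_nonneg (4*(1+ν) - x*t)]
          have := Real.exp_le_exp.2 (by linarith : (1 + ν) * t + -(x * (t ^ 2 / 4)) ≤
            2 * (1 + ν) ^ 2 / x + -(x / 8) * t ^ 2)
          nlinarith [this, le_of_lt hx, hν]
  · rw [show (0:ℝ) = ((x + ν) * Real.exp (2*(1+ν)^2/x)) * 0 by ring]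
    apply Tendsto.const_mul
    apply Real.tendsto_exp_atBot.comp
    have h1 : Tendsto (fun t : ℝ => (x/8) * t^2) atTop atTop :=
      (tendsto_pow_atTop two_ne_zero).const_mul_atTop (by positivity)
    have h2 := tendsto_neg_atTop_atBot.comp h1
    have h3 : (fun t : ℝ => -(x/8) * t^2) = (Neg.neg ∘ fun t : ℝ => x/8 * t^2) := by
      funext t; exact (neg_mul _ _)
    rw [h3]; exact h2


lemma K_identity (ν : ℝ) (hν : 0 ≤ ν) {x : ℝ} (hx : 0 < x) :
    x^2 * Kfun ν 2 x = x * Kfun ν 1 x + (x^2 + ν^2) * Kfun ν 0 x := by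
  set G : ℝ → ℝ := fun t => Real.exp (-(x * Real.cosh t)) *
      (-(x * (Real.sinh t * Real.cosh (ν * t))) - ν * Real.sinh (ν * t)) with hG
  set G' : ℝ → ℝ := fun t =>
      x^2 * (Real.cosh t ^ 2 * Real.exp (-(x * Real.cosh t)) * Real.cosh (ν * t))
      - x * (Real.cosh t ^ 1 * Real.exp (-(x * Real.cosh t)) * Real.cosh (ν * t))
      - (x^2 + ν^2) * (Real.cosh t ^ 0 * Real.exp (-(x * Real.cosh t)) * Real.cosh (ν * t))
      with hG'
  have hderiv : ∀ t ∈ Set.Ici (0:ℝ), HasDerivAt G (G' t) t := by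
    intro t _
    have h1 : HasDerivAt (fun t : ℝ => -(x * Real.cosh t)) (-(x * Real.sinh t)) t := by
      exact ((Real.hasDerivAt_cosh t).const_mul x).neg
    have h2 : HasDerivAt (fun t : ℝ => Real.exp (-(x * Real.cosh t)))
        (Real.exp (-(x * Real.cosh t)) * (-(x * Real.sinh t))) t := h1.exp
    have h3 : HasDerivAt (fun t : ℝ => -(x * (Real.sinh t * Real.cosh (ν * t))) -
        ν * Real.sinh (ν * t))
        (-(x * (Real.cosh t * Real.cosh (ν * t) + Real.sinh t * (ν * Real.sinh (ν * t))))
          - ν * (ν * Real.cosh (ν * t))) t := by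
      have hs : HasDerivAt (fun t : ℝ => Real.sinh t) (Real.cosh t) t := Real.hasDerivAt_sinh t
      have hcν : HasDerivAt (fun t : ℝ => Real.cosh (ν * t)) (ν * Real.sinh (ν * t)) t := by
        have := (Real.hasDerivAt_cosh (ν * t)).comp t ((hasDerivAt_id t).const_mul ν)
        exact this.congr_deriv (by ring)
      have hsν : HasDerivAt (fun t : ℝ => Real.sinh (ν * t)) (ν * Real.cosh (ν * t)) t := by
        have := (Real.hasDerivAt_sinh (ν * t)).comp t ((hasDerivAt_id t).const_mul ν)
        exact this.congr_deriv (by ring)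
      exact (((hs.mul hcν).const_mul x).neg).sub (hsν.const_mul ν)
    have h4 := h2.mul h3
    refine h4.congr_deriv ?_
    symm
    have hsq : Real.sinh t ^ 2 = Real.cosh t ^ 2 - 1 := Real.sinh_sq t
    simp only [hG']
    linear_combination (-(Real.exp (-(x * Real.cosh t)) * Real.cosh (ν * t) * x^2)) * hsq
  have hint2 := K_integrable ν hν 2 hx (le_refl x)
  have hint1 := K_integrable ν hν 1 hx (le_refl x)
  have hint0 := K_integrable ν hν 0 hx (le_refl x)
  have hG'int : IntegrableOn G' (Set.Ioi (0:ℝ)) := by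
    rw [hG']
    exact ((hint2.const_mul _).sub (hint1.const_mul _)).sub (hint0.const_mul _)
  have hzero := integral_Ioi_of_hasDerivAt_of_tendsto' hderiv hG'int (K_G_tendsto ν hν hx)
  have hG0 : G 0 = 0 := by simp [hG]
  rw [hG0, sub_zero] at hzero
  have hsplit : (∫ t in Set.Ioi (0:ℝ), G' t) =
      x^2 * Kfun ν 2 x - x * Kfun ν 1 x - (x^2 + ν^2) * Kfun ν 0 x := by
    rw [hG']
    rw [integral_sub, integral_sub, integral_const_mul, integral_const_mul, integral_const_mul]
    · rfl
    · exact hint2.const_mul _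
    · exact hint1.const_mul _
    · exact (hint2.const_mul _).sub (hint1.const_mul _)
    · exact hint0.const_mul _
  rw [hsplit] at hzero
  linarith


lemma A_cont (ν : ℝ) (n : ℕ) (x : ℝ) :
    Continuous fun θ => Real.cos θ ^ n * Real.exp (x * Real.cos θ) * Real.cos (ν * θ) := by
  fun_prop

lemma A_hasDerivAt (ν : ℝ) (n : ℕ) (x : ℝ) :
    HasDerivAt (Afun ν n) (Afun ν (n+1) x) x := by
  set F' : ℝ → ℝ → ℝ := fun y θ =>
    Real.cos θ ^ (n+1) * Real.exp (y * Real.cos θ) * Real.cos (ν * θ) with hF'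
  set bound : ℝ → ℝ := fun _ => Real.exp (|x| + 1) with hbound
  have h_bound : ∀ᵐ θ ∂(volume : Measure ℝ), θ ∈ Set.uIoc (0:ℝ) π → ∀ y ∈ ball x 1,
      ‖F' y θ‖ ≤ bound θ := by
    apply Eventually.of_forall
    intro θ _ y hy
    have hy' : |y| ≤ |x| + 1 := by
      have h := abs_sub_abs_le_abs_sub y x
      have := mem_ball_iff_norm.1 hy
      rw [Real.norm_eq_abs] at this
      linarith
    have h1 : |Real.cos θ| ≤ 1 := Real.abs_cos_le_one θ
    have h2 : |Real.cos (ν * θ)| ≤ 1 := Real.abs_cos_le_one _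
    have h3 : Real.exp (y * Real.cos θ) ≤ Real.exp (|x| + 1) := by
      apply Real.exp_le_exp.2
      calc y * Real.cos θ ≤ |y * Real.cos θ| := le_abs_self _
        _ = |y| * |Real.cos θ| := abs_mul _ _
        _ ≤ (|x| + 1) * 1 := by
            apply mul_le_mul hy' h1 (abs_nonneg _) (by positivity)
        _ = |x| + 1 := mul_one _
    rw [hF']
    simp only [Real.norm_eq_abs, abs_mul, abs_pow]
    calc |Real.cos θ| ^ (n+1) * |Real.exp (y * Real.cos θ)| * |Real.cos (ν * θ)|
        ≤ 1 * Real.exp (|x| + 1) * 1 := by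
          rw [abs_of_nonneg (Real.exp_pos _).le]
          apply mul_le_mul (mul_le_mul (pow_le_one₀ (abs_nonneg _) h1) h3
            (Real.exp_pos _).le (by positivity)) h2 (abs_nonneg _) (by positivity)
      _ = bound θ := by rw [hbound]; ring
  have h_diff : ∀ᵐ θ ∂(volume : Measure ℝ), θ ∈ Set.uIoc (0:ℝ) π → ∀ y ∈ ball x 1,
      HasDerivAt (fun y => Real.cos θ ^ n * Real.exp (y * Real.cos θ) * Real.cos (ν * θ))
        (F' y θ) y := by
    apply Eventually.of_forall
    intro θ _ y _
    have h1 : HasDerivAt (fun y : ℝ => y * Real.cos θ) (Real.cos θ) y := by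
      simpa using (hasDerivAt_id y).mul_const (Real.cos θ)
    have h2 := ((h1.exp).const_mul (Real.cos θ ^ n)).mul_const (Real.cos (ν * θ))
    refine h2.congr_deriv ?_
    symm
    simp only [hF']
    ring
  have hmeas : ∀ᶠ y in nhds x, AEStronglyMeasurable
      (fun θ => Real.cos θ ^ n * Real.exp (y * Real.cos θ) * Real.cos (ν * θ))
      ((volume : Measure ℝ).restrict (Set.uIoc (0:ℝ) π)) :=
    Eventually.of_forall fun y => ((A_cont ν n y).aestronglyMeasurable.restrict)
  have h'meas : AEStronglyMeasurable (F' x) ((volume : Measure ℝ).restrict (Set.uIoc (0:ℝ) π)) := by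
    rw [hF']; exact (A_cont ν (n+1) x).aestronglyMeasurable.restrict
  have hint : IntervalIntegrable
      (fun θ => Real.cos θ ^ n * Real.exp (x * Real.cos θ) * Real.cos (ν * θ))
      volume 0 π := (A_cont ν n x).intervalIntegrable _ _
  have hbint : IntervalIntegrable bound volume 0 π := intervalIntegrable_const
  have main := intervalIntegral.hasDerivAt_integral_of_dominated_loc_of_deriv_le
    (F := fun y θ => Real.cos θ ^ n * Real.exp (y * Real.cos θ) * Real.cos (ν * θ))
    (F' := F') (bound := bound) (ball_mem_nhds x zero_lt_one) hmeas hint h'meas h_bound hbint h_diff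
  exact main.2


lemma A_identity (m : ℕ) (x : ℝ) :
    x^2 * Afun (m:ℝ) 2 x + x * Afun (m:ℝ) 1 x = (x^2 + (m:ℝ)^2) * Afun (m:ℝ) 0 x := by
  set ν : ℝ := (m : ℝ) with hν
  set F : ℝ → ℝ := fun θ => Real.exp (x * Real.cos θ) *
      (-(x * (Real.sin θ * Real.cos (ν * θ))) + ν * Real.sin (ν * θ)) with hF
  set g : ℝ → ℝ := fun θ =>
      (x^2 + ν^2) * (Real.cos θ ^ 0 * Real.exp (x * Real.cos θ) * Real.cos (ν * θ))
      - x * (Real.cos θ ^ 1 * Real.exp (x * Real.cos θ) * Real.cos (ν * θ))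
      - x^2 * (Real.cos θ ^ 2 * Real.exp (x * Real.cos θ) * Real.cos (ν * θ)) with hg
  have hderiv : ∀ θ ∈ Set.uIcc (0:ℝ) π, HasDerivAt F (g θ) θ := by
    intro θ _
    have h1 : HasDerivAt (fun θ : ℝ => x * Real.cos θ) (x * (-Real.sin θ)) θ :=
      (Real.hasDerivAt_cos θ).const_mul x
    have h2 := h1.exp
    have hlin : HasDerivAt (fun θ : ℝ => ν * θ) ν θ := by
      simpa using (hasDerivAt_id θ).const_mul ν
    have hcν : HasDerivAt (fun θ : ℝ => Real.cos (ν * θ)) (-Real.sin (ν * θ) * ν) θ := hlin.cos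
    have hsν : HasDerivAt (fun θ : ℝ => Real.sin (ν * θ)) (Real.cos (ν * θ) * ν) θ := hlin.sin
    have h3 : HasDerivAt (fun θ : ℝ => -(x * (Real.sin θ * Real.cos (ν * θ))) +
        ν * Real.sin (ν * θ))
        (-(x * (Real.cos θ * Real.cos (ν * θ) + Real.sin θ * (-Real.sin (ν * θ) * ν)))
          + ν * (Real.cos (ν * θ) * ν)) θ :=
      ((((Real.hasDerivAt_sin θ).mul hcν).const_mul x).neg).add (hsν.const_mul ν)
    have h4 := h2.mul h3
    refine h4.congr_deriv ?_
    symm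
    have hsq : Real.sin θ ^ 2 = 1 - Real.cos θ ^ 2 := Real.sin_sq θ
    simp only [hg]
    linear_combination (-(Real.exp (x * Real.cos θ) * Real.cos (ν * θ) * x^2)) * hsq
  have hgint : IntervalIntegrable g volume 0 π := by
    rw [hg]
    exact ((continuous_const.mul (A_cont ν 0 x)).sub (continuous_const.mul (A_cont ν 1 x))).sub
      (continuous_const.mul (A_cont ν 2 x)) |>.intervalIntegrable _ _
  have hFTC := intervalIntegral.integral_eq_sub_of_hasDerivAt hderiv hgint
  have hFpi : F π = 0 := by
    have hs : Real.sin (ν * π) = 0 := by rw [hν]; exact Real.sin_nat_mul_pi m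
    rw [hF]; simp [hs]
  have hF0 : F 0 = 0 := by simp [hF]
  rw [hFpi, hF0, sub_zero] at hFTC
  have hsplit : (∫ θ in (0:ℝ)..π, g θ) =
      (x^2 + ν^2) * Afun ν 0 x - x * Afun ν 1 x - x^2 * Afun ν 2 x := by
    rw [hg]
    rw [intervalIntegral.integral_sub, intervalIntegral.integral_sub,
      intervalIntegral.integral_const_mul, intervalIntegral.integral_const_mul,
      intervalIntegral.integral_const_mul]
    · rfl
    · exact (continuous_const.mul (A_cont ν 0 x)).intervalIntegrable _ _
    · exact (continuous_const.mul (A_cont ν 1 x)).intervalIntegrable _ _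
    · exact ((continuous_const.mul (A_cont ν 0 x)).sub (continuous_const.mul (A_cont ν 1 x))).intervalIntegrable _ _
    · exact (continuous_const.mul (A_cont ν 2 x)).intervalIntegrable _ _
  rw [hsplit] at hFTC
  linarith


lemma ode_key (h ν C : ℝ) (hh : 0 < h) (hν : 0 < ν) (w w1 w2 : ℝ → ℝ)
    (hw1 : ∀ x, 0 < x → HasDerivAt w (w1 x) x)
    (hw2 : ∀ x, 0 < x → HasDerivAt w1 (w2 x) x)
    (hid : ∀ x, 0 < x → x^2 * w2 x + x * w1 x = (x^2 + ν^2) * w x)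
    (u : ℝ → ℝ) (S : Set ℝ) (hS : IsOpen S) (ρ : ℝ) (hρS : ρ ∈ S) (hρ : 0 < ρ)
    (hpos : ∀ r ∈ S, 0 < r)
    (huS : ∀ r ∈ S, u r = C * r * w1 (ν * r / h)) :
    (ρ / (1 + (1/h)^2*ρ^2)) * deriv (deriv u) ρ +
      ((1 - (1/h)^2*ρ^2)/(1 + (1/h)^2*ρ^2)^2) * deriv u ρ - (ν^2/ρ) * u ρ = 0 := by
  set v1 : ℝ → ℝ := fun r => C * (ν*r/h + ν^2/(ν*r/h)) * w (ν*r/h) with hv1def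
  have hz : ∀ r : ℝ, 0 < r → 0 < ν * r / h := fun r hr => by positivity
  -- Step 1 : deriv u = v1 on S
  have step1 : ∀ r ∈ S, deriv u r = v1 r := by
    intro r hr
    have hrpos : 0 < r := hpos r hr
    have hzr : 0 < ν * r / h := hz r hrpos
    have hcr : HasDerivAt (fun r : ℝ => ν * r / h) (ν / h) r := by
      simpa using ((hasDerivAt_id r).const_mul ν).div_const h
    have hw1c : HasDerivAt (fun r : ℝ => w1 (ν * r / h)) (w2 (ν*r/h) * (ν/h)) r := by
      have := HasDerivAt.comp r (hw2 _ hzr) hcr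
      exact this
    have hCr : HasDerivAt (fun r : ℝ => C * r) C r := by
      simpa using (hasDerivAt_id r).const_mul C
    have hv : HasDerivAt (fun y : ℝ => C * y * w1 (ν * y / h))
        (C * w1 (ν*r/h) + (C * r) * (w2 (ν*r/h) * (ν/h))) r := by
      have := hCr.mul hw1c
      exact this
    have huv : u =ᶠ[nhds r] fun y => C * y * w1 (ν * y / h) := by
      filter_upwards [hS.mem_nhds hr] with y hy
      exact huS y hy
    have hderiv_u : deriv u r = C * w1 (ν*r/h) + (C * r) * (w2 (ν*r/h) * (ν/h)) := by
      rw [huv.deriv_eq]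
      exact hv.deriv
    rw [hderiv_u, hv1def]
    have hne : (ν * r / h) ≠ 0 := ne_of_gt hzr
    have hhne : h ≠ 0 := ne_of_gt hh
    have hidr' : (ν*r)^2 * w2 (ν*r/h) + (ν*r)*h*w1 (ν*r/h)
        = ((ν*r)^2 + ν^2*h^2) * w (ν*r/h) := by
      apply mul_left_cancel₀ (pow_ne_zero 3 hhne)
      have hidr := hid _ hzr
      field_simp at hidr
      linear_combination h^3 * ν * hidr
    field_simp
    have hidr := hid _ hzr
    field_simp at hidr
    linear_combination C * hidr
  -- Step 2 : second derivative
  have hzρ : 0 < ν * ρ / h := hz ρ hρ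
  have hneρ : (ν * ρ / h) ≠ 0 := ne_of_gt hzρ
  have hcr : HasDerivAt (fun r : ℝ => ν * r / h) (ν / h) ρ := by
    simpa using ((hasDerivAt_id ρ).const_mul ν).div_const h
  have hq : HasDerivAt (fun r : ℝ => C * (ν*r/h + ν^2/(ν*r/h)))
      (C * (ν/h + (0 * (ν*ρ/h) - ν^2 * (ν/h))/(ν*ρ/h)^2)) ρ := by
    have hinv : HasDerivAt (fun r : ℝ => ν^2/(ν*r/h))
        ((0 * (ν*ρ/h) - ν^2 * (ν/h))/(ν*ρ/h)^2) ρ :=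
      (hasDerivAt_const ρ (ν^2)).div hcr hneρ
    exact (hcr.add hinv).const_mul C
  have hwc : HasDerivAt (fun r : ℝ => w (ν*r/h)) (w1 (ν*ρ/h) * (ν/h)) ρ := by
    have := HasDerivAt.comp ρ (hw1 _ hzρ) hcr
    exact this
  have hv1 : HasDerivAt v1
      ((C * (ν/h + (0 * (ν*ρ/h) - ν^2 * (ν/h))/(ν*ρ/h)^2)) * w (ν*ρ/h)
        + (C * (ν*ρ/h + ν^2/(ν*ρ/h))) * (w1 (ν*ρ/h) * (ν/h))) ρ := hq.mul hwc
  have step2 : deriv (deriv u) ρ =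
      (C * (ν/h + (0 * (ν*ρ/h) - ν^2 * (ν/h))/(ν*ρ/h)^2)) * w (ν*ρ/h)
        + (C * (ν*ρ/h + ν^2/(ν*ρ/h))) * (w1 (ν*ρ/h) * (ν/h)) := by
    have hequiv : deriv u =ᶠ[nhds ρ] v1 := by
      filter_upwards [hS.mem_nhds hρS] with r hr
      exact step1 r hr
    rw [hequiv.deriv_eq]
    exact hv1.deriv
  -- Step 3 : algebra
  have hA : (0:ℝ) < 1 + (1/h)^2*ρ^2 := by positivity
  rw [step2, step1 ρ hρS, huS ρ hρS, hv1def]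
  have hhne : h ≠ 0 := ne_of_gt hh
  have hρne : ρ ≠ 0 := ne_of_gt hρ
  have hAne : (1 + (1/h)^2*ρ^2) ≠ 0 := ne_of_gt hA
  field_simp
  ring


lemma besselK_eq (ν : ℝ) : besselK ν = Kfun ν 0 := by
  funext z
  simp [besselK, Kfun]

lemma besselI_eq (m : ℕ) : besselI (m : ℝ) = fun x => (1/π) * Afun (m:ℝ) 0 x := by
  funext x
  have hs : Real.sin ((m:ℝ) * π) = 0 := Real.sin_nat_mul_pi m
  simp [besselI, Afun, hs]

lemma besselI_hasDeriv (m : ℕ) (x : ℝ) :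
    HasDerivAt (besselI (m:ℝ)) ((1/π) * Afun (m:ℝ) 1 x) x := by
  rw [besselI_eq m]
  exact (A_hasDerivAt (m:ℝ) 0 x).const_mul (1/π)

lemma besselK_hasDeriv (m : ℕ) {x : ℝ} (hx : 0 < x) :
    HasDerivAt (besselK (m:ℝ)) (-(Kfun (m:ℝ) 1 x)) x := by
  rw [besselK_eq]
  exact K_hasDerivAt (m:ℝ) (Nat.cast_nonneg m) 0 hx

/-- The Fourier coefficient G_m(ρ,ρ₀) of the helical Green
function, defined piecewise via products of I_m' and K_m', solves for ρ ≠ ρ₀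
the ODE (ρ/(1+κ²ρ²)) u'' + ((1-κ²ρ²)/(1+κ²ρ²)²) u' - (m²/ρ) u = 0, κ = 1/h. -/
theorem stmt_11 (h ρ₀ : ℝ) (hh : 0 < h) (hρ₀ : 0 < ρ₀) (m : ℕ) (hm : 2 ≤ m)
    (u : ℝ → ℝ)
    (hu : ∀ ρ, u ρ =
      if ρ < ρ₀ then
        (ρ * ρ₀ / (2 * π * h ^ 2)) * deriv (besselI m) (m * ρ / h) *
          deriv (besselK m) (m * ρ₀ / h)
      else
        (ρ * ρ₀ / (2 * π * h ^ 2)) * deriv (besselK m) (m * ρ / h) *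
          deriv (besselI m) (m * ρ₀ / h)) :
    ∀ ρ : ℝ, 0 < ρ → ρ ≠ ρ₀ →
      (ρ / (1 + (1 / h) ^ 2 * ρ ^ 2)) * deriv (deriv u) ρ +
        ((1 - (1 / h) ^ 2 * ρ ^ 2) / (1 + (1 / h) ^ 2 * ρ ^ 2) ^ 2) * deriv u ρ -
        ((m : ℝ) ^ 2 / ρ) * u ρ = 0 := by
  intro ρ hρ hneq
  have hν : (0:ℝ) < (m:ℝ) := by
    have : (0:ℕ) < m := lt_of_lt_of_le (by norm_num) hm
    exact_mod_cast this
  have hIderiv : ∀ y : ℝ, deriv (besselI (m:ℝ)) y = (1/π) * Afun (m:ℝ) 1 y :=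
    fun y => (besselI_hasDeriv m y).deriv
  have hKderiv : ∀ y : ℝ, 0 < y → deriv (besselK (m:ℝ)) y = -(Kfun (m:ℝ) 1 y) :=
    fun y hy => (besselK_hasDeriv m hy).deriv
  rcases lt_or_gt_of_ne hneq with hlt | hgt
  · -- ρ < ρ₀ : use the I-side
    set w : ℝ → ℝ := fun x => (1/π) * Afun (m:ℝ) 0 x with hw
    set w1 : ℝ → ℝ := fun x => (1/π) * Afun (m:ℝ) 1 x with hw1def
    set w2 : ℝ → ℝ := fun x => (1/π) * Afun (m:ℝ) 2 x with hw2def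
    have hw1 : ∀ x, 0 < x → HasDerivAt w (w1 x) x :=
      fun x _ => (A_hasDerivAt (m:ℝ) 0 x).const_mul (1/π)
    have hw2 : ∀ x, 0 < x → HasDerivAt w1 (w2 x) x :=
      fun x _ => (A_hasDerivAt (m:ℝ) 1 x).const_mul (1/π)
    have hid : ∀ x, 0 < x → x^2 * w2 x + x * w1 x = (x^2 + ((m:ℝ))^2) * w x := by
      intro x _
      have := A_identity m x
      simp only [hw, hw1def, hw2def]
      field_simp
      linarith
    refine ode_key h (m:ℝ) (ρ₀ / (2 * π * h ^ 2) * deriv (besselK (m:ℝ)) ((m:ℝ) * ρ₀ / h))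
      hh hν w w1 w2 hw1 hw2 hid u (Set.Ioo 0 ρ₀) isOpen_Ioo ρ ⟨hρ, hlt⟩ hρ
      (fun r hr => hr.1) ?_
    intro r hr
    rw [hu r, if_pos hr.2, hIderiv ((m:ℝ) * r / h)]
    simp only [hw1def]
    ring
  · -- ρ₀ < ρ : use the K-side
    set w : ℝ → ℝ := fun x => Kfun (m:ℝ) 0 x with hw
    set w1 : ℝ → ℝ := fun x => -(Kfun (m:ℝ) 1 x) with hw1def
    set w2 : ℝ → ℝ := fun x => Kfun (m:ℝ) 2 x with hw2def
    have hw1 : ∀ x, 0 < x → HasDerivAt w (w1 x) x :=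
      fun x hx => K_hasDerivAt (m:ℝ) (Nat.cast_nonneg m) 0 hx
    have hw2 : ∀ x, 0 < x → HasDerivAt w1 (w2 x) x := by
      intro x hx
      have := (K_hasDerivAt (m:ℝ) (Nat.cast_nonneg m) 1 hx).neg
      exact this.congr_deriv (neg_neg _)
    have hid : ∀ x, 0 < x → x^2 * w2 x + x * w1 x = (x^2 + ((m:ℝ))^2) * w x := by
      intro x hx
      have := K_identity (m:ℝ) (Nat.cast_nonneg m) hx
      simp only [hw, hw1def, hw2def]
      linarith
    refine ode_key h (m:ℝ) (ρ₀ / (2 * π * h ^ 2) * deriv (besselI (m:ℝ)) ((m:ℝ) * ρ₀ / h))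
      hh hν w w1 w2 hw1 hw2 hid u (Set.Ioi ρ₀) isOpen_Ioi ρ hgt hρ
      (fun r hr => lt_trans hρ₀ hr) ?_
    intro r hr
    have hrpos : 0 < r := lt_trans hρ₀ hr
    have hx : 0 < (m:ℝ) * r / h := by positivity
    rw [hu r, if_neg (not_lt.2 (le_of_lt hr)), hKderiv ((m:ℝ) * r / h) hx]
    simp only [hw1def]
    ring
end

section
/- Define for z > 0 and s ∈ (0, 1/3] the function h_z(s) = 2√((1 - s/2)² + z²)(√(1 + (1-s)² z²) - s)(√((1 - 3s/2)² + (1-s)² z²) + s/2) - (1-s)²(s + (1-s)√(1+z²) + √((1-2s)² + (1-s)² z²))(√((1 + s/2)² + z²) - s/2)(√((1-s)² + z²) + s). Then for every fixed z > 0, lim_{s→0⁺} h_z(s) = 0 and the right derivative of h_z at 0 equals 2√(1+z²)(z² - (3/2)√(1+z²) + 2), which is at least 7/8 for all z ≥ 0. -/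
private lemma sqrtDeriv {p : ℝ → ℝ} {p' c : ℝ} (hp : HasDerivAt p p' 0)
    (hc : p 0 = c) (h0 : 0 < c) :
    HasDerivAt (fun s => Real.sqrt (p s)) (p' / (2 * Real.sqrt c)) 0 := by
  have h := (Real.hasDerivAt_sqrt (x := p 0) (by rw [hc]; exact h0.ne')).comp 0 hp
  rw [hc] at h
  refine h.congr_deriv ?_
  ring

/-- For fixed z > 0, the normalized comparison function h_z
satisfies lim_{s→0⁺} h_z(s) = 0 and its right derivative at 0 equals
2√(1+z²)(z² - (3/2)√(1+z²) + 2), which is ≥ 7/8 for all z ≥ 0. -/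
theorem stmt_12 (z : ℝ) (hz : 0 < z) (H : ℝ → ℝ → ℝ)
    (hH : ∀ z s : ℝ, H z s =
      2 * Real.sqrt ((1 - s / 2) ^ 2 + z ^ 2) *
          (Real.sqrt (1 + (1 - s) ^ 2 * z ^ 2) - s) *
          (Real.sqrt ((1 - 3 * s / 2) ^ 2 + (1 - s) ^ 2 * z ^ 2) + s / 2) -
        (1 - s) ^ 2 *
          (s + (1 - s) * Real.sqrt (1 + z ^ 2) +
            Real.sqrt ((1 - 2 * s) ^ 2 + (1 - s) ^ 2 * z ^ 2)) *
          (Real.sqrt ((1 + s / 2) ^ 2 + z ^ 2) - s / 2) *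
          (Real.sqrt ((1 - s) ^ 2 + z ^ 2) + s)) :
    Filter.Tendsto (H z) (nhdsWithin 0 (Set.Ioi 0)) (nhds 0) ∧
    HasDerivWithinAt (H z)
      (2 * Real.sqrt (1 + z ^ 2) * (z ^ 2 - 3 / 2 * Real.sqrt (1 + z ^ 2) + 2))
      (Set.Ioi 0) 0 ∧
    ∀ w : ℝ, 0 ≤ w →
      7 / 8 ≤ 2 * Real.sqrt (1 + w ^ 2) *
        (w ^ 2 - 3 / 2 * Real.sqrt (1 + w ^ 2) + 2) := by
  have hfun : H z = fun s =>
      2 * Real.sqrt ((1 - s / 2) ^ 2 + z ^ 2) *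
          (Real.sqrt (1 + (1 - s) ^ 2 * z ^ 2) - s) *
          (Real.sqrt ((1 - 3 * s / 2) ^ 2 + (1 - s) ^ 2 * z ^ 2) + s / 2) -
        (1 - s) ^ 2 *
          (s + (1 - s) * Real.sqrt (1 + z ^ 2) +
            Real.sqrt ((1 - 2 * s) ^ 2 + (1 - s) ^ 2 * z ^ 2)) *
          (Real.sqrt ((1 + s / 2) ^ 2 + z ^ 2) - s / 2) *
          (Real.sqrt ((1 - s) ^ 2 + z ^ 2) + s) := funext fun s => hH z s
  have hzpos : (0:ℝ) < 1 + z ^ 2 := by positivity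
  have hu : 0 < Real.sqrt (1 + z ^ 2) := Real.sqrt_pos.mpr hzpos
  have hu2 : Real.sqrt (1 + z ^ 2) ^ 2 = 1 + z ^ 2 := Real.sq_sqrt hzpos.le
  -- inner polynomial derivatives at 0
  have hq1 : HasDerivAt (fun s : ℝ => (1 - s / 2) ^ 2 + z ^ 2) (-1) 0 := by
    have h := ((((hasDerivAt_id (0:ℝ)).div_const 2).const_sub 1).pow 2).add_const (z ^ 2)
    exact h.congr_deriv (by norm_num)
  have hq2 : HasDerivAt (fun s : ℝ => 1 + (1 - s) ^ 2 * z ^ 2)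
      (-2 * z ^ 2) 0 := by
    have h := ((((hasDerivAt_id (0:ℝ)).const_sub 1).pow 2).mul_const (z ^ 2)).const_add 1
    exact h.congr_deriv (by norm_num)
  have hq3 : HasDerivAt (fun s : ℝ => (1 - 3 * s / 2) ^ 2 + (1 - s) ^ 2 * z ^ 2)
      (-3 + -2 * z ^ 2) 0 := by
    have h1 := ((((hasDerivAt_id (0:ℝ)).const_mul 3).div_const 2).const_sub 1).pow 2
    have h2 := (((hasDerivAt_id (0:ℝ)).const_sub 1).pow 2).mul_const (z ^ 2)
    exact (h1.add h2).congr_deriv (by norm_num)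
  have hq4 : HasDerivAt (fun s : ℝ => (1 - 2 * s) ^ 2 + (1 - s) ^ 2 * z ^ 2)
      (-4 + -2 * z ^ 2) 0 := by
    have h1 := (((hasDerivAt_id (0:ℝ)).const_mul 2).const_sub 1).pow 2
    have h2 := (((hasDerivAt_id (0:ℝ)).const_sub 1).pow 2).mul_const (z ^ 2)
    exact (h1.add h2).congr_deriv (by norm_num)
  have hq5 : HasDerivAt (fun s : ℝ => (1 + s / 2) ^ 2 + z ^ 2)
      (1 : ℝ) 0 := by
    have h := ((((hasDerivAt_id (0:ℝ)).div_const 2).const_add 1).pow 2).add_const (z ^ 2)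
    exact h.congr_deriv (by norm_num)
  have hq6 : HasDerivAt (fun s : ℝ => (1 - s) ^ 2 + z ^ 2)
      (-2 : ℝ) 0 := by
    have h := (((hasDerivAt_id (0:ℝ)).const_sub 1).pow 2).add_const (z ^ 2)
    exact h.congr_deriv (by norm_num)
  -- sqrt factors
  have hs1 := sqrtDeriv hq1 (by norm_num) hzpos
  have hs2 := sqrtDeriv hq2 (by norm_num) hzpos
  have hs3 := sqrtDeriv hq3 (by norm_num) hzpos
  have hs4 := sqrtDeriv hq4 (by norm_num) hzpos
  have hs5 := sqrtDeriv hq5 (by norm_num) hzpos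
  have hs6 := sqrtDeriv hq6 (by norm_num) hzpos
  -- factors
  have hA := hs1
  have hB := hs2.sub (hasDerivAt_id (0:ℝ))
  have hC := hs3.add ((hasDerivAt_id (0:ℝ)).div_const 2)
  have hD := ((hasDerivAt_id (0:ℝ)).const_sub 1).pow 2
  have hE := (((hasDerivAt_id (0:ℝ)).add
      (((hasDerivAt_id (0:ℝ)).const_sub 1).mul_const (Real.sqrt (1 + z ^ 2)))).add hs4)
  have hF := hs5.sub ((hasDerivAt_id (0:ℝ)).div_const 2)
  have hG := hs6.add (hasDerivAt_id (0:ℝ))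
  have hABC := ((hA.const_mul 2).mul hB).mul hC
  have hDEFG := ((hD.mul hE).mul hF).mul hG
  have hbig := hABC.sub hDEFG
  have key : HasDerivAt (H z)
      (2 * Real.sqrt (1 + z ^ 2) * (z ^ 2 - 3 / 2 * Real.sqrt (1 + z ^ 2) + 2)) 0 := by
    rw [hfun]
    refine hbig.congr_deriv ?_
    norm_num
    generalize hud : Real.sqrt (1 + z ^ 2) = u at hu hu2 ⊢
    have hz2 : z ^ 2 = u ^ 2 - 1 := by rw [hu2]; ring
    rw [hz2]
    field_simp
    ring
  refine ⟨?_, key.hasDerivWithinAt, ?_⟩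
  · have hc := key.continuousAt.continuousWithinAt (s := Set.Ioi 0)
    have h0 : H z 0 = 0 := by
      rw [hH]
      norm_num
      ring
    have h2 : Filter.Tendsto (H z) (nhdsWithin 0 (Set.Ioi 0)) (nhds (H z 0)) := hc
    rwa [h0] at h2
  · intro w hw
    have hwpos : (0:ℝ) < 1 + w ^ 2 := by positivity
    have hv2 : Real.sqrt (1 + w ^ 2) ^ 2 = 1 + w ^ 2 := Real.sq_sqrt hwpos.le
    have hv1 : 1 ≤ Real.sqrt (1 + w ^ 2) := by
      nlinarith [Real.sqrt_nonneg (1 + w ^ 2)]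
    set v := Real.sqrt (1 + w ^ 2)
    nlinarith [sq_nonneg (v - 1), mul_nonneg (sub_nonneg.mpr hv1) (sq_nonneg (v - 1)), hv1]
end

section
/- Define for z ≥ 1 and s ∈ (0, 1/3] the function g_z(s) = 2√((1/z²)(1 - s/2)² + 1)(√(1/z² + (1-s)²) - s/z)(√((1/z²)(1 - 3s/2)² + (1-s)²) + s/(2z)) - (1-s)²(s/z + (1-s)√(1 + 1/z²) + √((1/z²)(1-2s)² + (1-s)²))(√((1/z²)(1 + s/2)² + 1) - s/(2z))(√((1/z²)(1-s)² + 1) + s/z). Then lim_{s→0⁺} g_z(s) = 0 and the right derivative of g_z at 0 equals 2√(1 + 1/z²)(2/z² - (3/(2z))√(1/z² + 1) + 1), which is at least 2(√2 - 3/4)² for all z ≥ 1. -/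
set_option maxHeartbeats 1600000 in
/-- For fixed z ≥ 1, the large-z normalized comparison function
g_z satisfies lim_{s→0⁺} g_z(s) = 0 and its right derivative at 0 equals
2√(1+1/z²)(2/z² - (3/(2z))√(1/z²+1) + 1), which is ≥ 2(√2 - 3/4)² for z ≥ 1. -/
theorem stmt_14 (z : ℝ) (hz : 1 ≤ z) (G : ℝ → ℝ → ℝ)
    (hG : ∀ z s : ℝ, G z s =
      2 * Real.sqrt ((1 / z ^ 2) * (1 - s / 2) ^ 2 + 1) *
          (Real.sqrt (1 / z ^ 2 + (1 - s) ^ 2) - s / z) *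
          (Real.sqrt ((1 / z ^ 2) * (1 - 3 * s / 2) ^ 2 + (1 - s) ^ 2) +
            s / (2 * z)) -
        (1 - s) ^ 2 *
          (s / z + (1 - s) * Real.sqrt (1 + 1 / z ^ 2) +
            Real.sqrt ((1 / z ^ 2) * (1 - 2 * s) ^ 2 + (1 - s) ^ 2)) *
          (Real.sqrt ((1 / z ^ 2) * (1 + s / 2) ^ 2 + 1) - s / (2 * z)) *
          (Real.sqrt ((1 / z ^ 2) * (1 - s) ^ 2 + 1) + s / z)) :
    Filter.Tendsto (G z) (nhdsWithin 0 (Set.Ioi 0)) (nhds 0) ∧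
    HasDerivWithinAt (G z)
      (2 * Real.sqrt (1 + 1 / z ^ 2) *
        (2 / z ^ 2 - 3 / (2 * z) * Real.sqrt (1 / z ^ 2 + 1) + 1))
      (Set.Ioi 0) 0 ∧
    ∀ w : ℝ, 1 ≤ w →
      2 * (Real.sqrt 2 - 3 / 4) ^ 2 ≤
        2 * Real.sqrt (1 + 1 / w ^ 2) *
          (2 / w ^ 2 - 3 / (2 * w) * Real.sqrt (1 / w ^ 2 + 1) + 1) := by
  have hz0 : (0:ℝ) < z := lt_of_lt_of_le one_pos hz
  have hzne : z ≠ 0 := ne_of_gt hz0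
  -- the value at 0
  have hG0 : G z 0 = 0 := by
    rw [hG z 0, show (1:ℝ) + 1 / z ^ 2 = 1 / z ^ 2 + 1 from add_comm _ _]
    norm_num
    ring
  -- the derivative
  have hD : HasDerivWithinAt (G z)
      (2 * Real.sqrt (1 + 1 / z ^ 2) *
        (2 / z ^ 2 - 3 / (2 * z) * Real.sqrt (1 / z ^ 2 + 1) + 1))
      (Set.Ioi 0) 0 := by
    have e1 : HasDerivAt (fun s : ℝ => 1 - s / 2) (-(1/2)) 0 := by
      simpa using ((hasDerivAt_id (0:ℝ)).div_const 2).const_sub 1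
    have e2 : HasDerivAt (fun s : ℝ => 1 - s) (-1) 0 := by
      simpa using (hasDerivAt_id (0:ℝ)).const_sub 1
    have e3 : HasDerivAt (fun s : ℝ => 1 - 3 * s / 2) (-(3/2)) 0 := by
      simpa using (((hasDerivAt_id (0:ℝ)).const_mul 3).div_const 2).const_sub 1
    have e4 : HasDerivAt (fun s : ℝ => 1 - 2 * s) (-2) 0 := by
      simpa using ((hasDerivAt_id (0:ℝ)).const_mul 2).const_sub 1
    have e5 : HasDerivAt (fun s : ℝ => 1 + s / 2) (1/2) 0 := by
      simpa using ((hasDerivAt_id (0:ℝ)).div_const 2).const_add 1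
    have hA := ((((e1.pow 2).const_mul (1/z^2)).add_const 1).sqrt (by simp only [Pi.add_apply, Pi.pow_apply]; positivity))
    have hB := ((((e2.pow 2).const_add (1/z^2)).sqrt (by simp only [Pi.add_apply, Pi.pow_apply]; positivity)).sub
      ((hasDerivAt_id (0:ℝ)).div_const z))
    have hC := (((((e3.pow 2).const_mul (1/z^2)).add (e2.pow 2)).sqrt (by simp only [Pi.add_apply, Pi.pow_apply]; positivity)).add
      ((hasDerivAt_id (0:ℝ)).div_const (2*z)))
    have hP := (((hasDerivAt_id (0:ℝ)).div_const z).add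
        (e2.mul_const (Real.sqrt (1 + 1/z^2)))).add
      ((((e4.pow 2).const_mul (1/z^2)).add (e2.pow 2)).sqrt (by simp only [Pi.add_apply, Pi.pow_apply]; positivity))
    have hQ := (((((e5.pow 2).const_mul (1/z^2)).add_const 1).sqrt (by simp only [Pi.add_apply, Pi.pow_apply]; positivity)).sub
      ((hasDerivAt_id (0:ℝ)).div_const (2*z)))
    have hR := (((((e2.pow 2).const_mul (1/z^2)).add_const 1).sqrt (by simp only [Pi.add_apply, Pi.pow_apply]; positivity)).add
      ((hasDerivAt_id (0:ℝ)).div_const z))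
    have hS := e2.pow 2
    have big := (((hA.const_mul 2).mul hB).mul hC).sub (((hS.mul hP).mul hQ).mul hR)
    norm_num at big
    have hfun : G z = fun s : ℝ =>
        2 * Real.sqrt ((1 / z ^ 2) * (1 - s / 2) ^ 2 + 1) *
            (Real.sqrt (1 / z ^ 2 + (1 - s) ^ 2) - s / z) *
            (Real.sqrt ((1 / z ^ 2) * (1 - 3 * s / 2) ^ 2 + (1 - s) ^ 2) +
              s / (2 * z)) -
          (1 - s) ^ 2 *
            (s / z + (1 - s) * Real.sqrt (1 + 1 / z ^ 2) +
              Real.sqrt ((1 / z ^ 2) * (1 - 2 * s) ^ 2 + (1 - s) ^ 2)) *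
            (Real.sqrt ((1 / z ^ 2) * (1 + s / 2) ^ 2 + 1) - s / (2 * z)) *
            (Real.sqrt ((1 / z ^ 2) * (1 - s) ^ 2 + 1) + s / z) := funext (hG z)
    rw [hfun]
    refine HasDerivAt.hasDerivWithinAt ?_
    convert big using 1
    · norm_num; rfl
    rw [show (1:ℝ) + 1/z^2 = 1/z^2 + 1 from add_comm _ _]
    rw [show (1:ℝ) + (z^2)⁻¹ = (z^2)⁻¹ + 1 from add_comm _ _]
    rw [show (1:ℝ)/z^2 = (z^2)⁻¹ from one_div _]
    set a : ℝ := Real.sqrt ((z^2)⁻¹ + 1) with hadef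
    have ha0 : 0 < a := Real.sqrt_pos.mpr (by positivity)
    have ha2 : a ^ 2 = (z^2)⁻¹ + 1 := Real.sq_sqrt (by positivity)
    have hane : a ≠ 0 := ne_of_gt ha0
    field_simp
    have ha2' : a ^ 2 * z ^ 2 = 1 + z ^ 2 := by rw [ha2]; field_simp
    ring_nf
    linear_combination (-10) * ha2'
  refine ⟨?_, hD, ?_⟩
  · have h := hD.continuousWithinAt.tendsto
    rwa [hG0] at h
  · intro w hw
    have hw0 : (0:ℝ) < w := lt_of_lt_of_le one_pos hw
    set t : ℝ := 1 / w with ht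
    have ht0 : 0 < t := by positivity
    have ht1 : t ≤ 1 := by rw [ht]; exact (div_le_one hw0).mpr hw
    have h1 : 1 / w ^ 2 = t ^ 2 := by rw [ht]; ring
    rw [show (1:ℝ) + 1 / w ^ 2 = 1 / w ^ 2 + 1 by ring, h1]
    set a : ℝ := Real.sqrt (t ^ 2 + 1) with ha
    have ha0 : 0 < a := Real.sqrt_pos.mpr (by positivity)
    have ha2 : a ^ 2 = t ^ 2 + 1 := Real.sq_sqrt (by positivity)
    have ha1 : 1 ≤ a := by nlinarith [Real.sqrt_nonneg (t^2+1)]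
    have hs22 : Real.sqrt 2 ^ 2 = 2 := Real.sq_sqrt (by norm_num)
    have h2 : (11:ℝ)/8 ≤ Real.sqrt 2 := by
      nlinarith [hs22, Real.sqrt_nonneg 2]
    have key : 2 * a * (2 / w ^ 2 - 3 / (2 * w) * a + 1) = 2*a*(2*t^2+1) - 3*t*a^2 := by
      rw [ht]; ring
    rw [key, ha2]
    have hE : (1:ℝ) ≤ 2*a*(2*t^2+1) - 3*t*(t^2+1) := by
      nlinarith [sq_nonneg (a-1), sq_nonneg (t - 1/2), sq_nonneg (a - t),
        mul_pos ht0 ha0, sq_nonneg (t*a - 1)]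
    nlinarith [hE, h2, hs22]
end
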